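/- arXiv:1105.1151 — 8 statements merged into one kernel-verified Lean document; each statement's English description precedes it below -/
import Mathlib

section
/- For coprime positive integers p and q, the map (x,y) ↦ pq − qx − py is a bijection from the set of boxes of R_+^{p,q} (that is, pairs of integers (x,y) with x ≥ 1, y ≥ 1 and qx + py < pq) onto the set ℕ \ Γ^{p,q} of nonnegative integers not belonging to the semigroup Γ^{p,q}; in particular, |ℕ \ Γ^{p,q}| = (p−1)(q−1)/2 and |R_+^{p,q}| = (p−1)(q−1)/2. -/
/-- The numerical semigroup `Γ^{p,q} = {ap + bq : a, b ∈ ℕ}`. -/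
def Gamma (p q : ℕ) : Set ℕ := {n | ∃ a b : ℕ, n = a * p + b * q}

/-- A `0`-normalized `Γ^{p,q}`-semi-module: `0 ∈ Δ` and `Δ + Γ^{p,q} ⊆ Δ`. -/
def IsSemiModule (p q : ℕ) (Δ : Set ℕ) : Prop :=
  0 ∈ Δ ∧ ∀ x ∈ Δ, ∀ g ∈ Gamma p q, x + g ∈ Δ

/-- Boxes of the `p × q` rectangle `R^{p,q}`: pairs `(x,y)` with `1 ≤ x ≤ p`, `1 ≤ y ≤ q`. -/
def Rbox (p q : ℕ) : Set (ℕ × ℕ) :=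
  {c | 1 ≤ c.1 ∧ c.1 ≤ p ∧ 1 ≤ c.2 ∧ c.2 ≤ q}

/-- Boxes of `R_+^{p,q}`: boxes with positive label, i.e. `qx + py < pq`. -/
def Rplus (p q : ℕ) : Set (ℕ × ℕ) :=
  {c | 1 ≤ c.1 ∧ 1 ≤ c.2 ∧ q * c.1 + p * c.2 < p * q}

/-- The label `f(x,y) = pq - qx - py` of a box. -/
def boxLabel (p q : ℕ) (c : ℕ × ℕ) : ℕ := p * q - (q * c.1 + p * c.2)

lemma rplus_lt {p q : ℕ} (hp : 0 < p) (hq : 0 < q) {c : ℕ × ℕ} (hc : c ∈ Rplus p q) :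
    c.1 < p ∧ c.2 < q := by
  obtain ⟨h1, h2, h3⟩ := hc
  constructor
  · by_contra h
    push_neg at h
    have : q * p ≤ q * c.1 := Nat.mul_le_mul_left q h
    nlinarith
  · by_contra h
    push_neg at h
    have : p * q ≤ p * c.2 := Nat.mul_le_mul_left p h
    nlinarith

lemma label_notMem {p q : ℕ} (hp : 0 < p) (hq : 0 < q) (hpq : Nat.Coprime p q)
    {c : ℕ × ℕ} (hc : c ∈ Rplus p q) : boxLabel p q c ∉ Gamma p q := by
  obtain ⟨h1, h2, h3⟩ := hc
  rintro ⟨a, b, hab⟩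
  have key : p * (a + c.2) + q * (b + c.1) = p * q := by
    unfold boxLabel at hab
    have : p * q - (q * c.1 + p * c.2) = a * p + b * q := hab
    have h4 : p * q = a * p + b * q + (q * c.1 + p * c.2) := by omega
    ring_nf
    ring_nf at h4
    linarith
  have hdvd : p ∣ b + c.1 := by
    have : p ∣ q * (b + c.1) := ⟨q - (a + c.2), by
      have hle : a + c.2 ≤ q := by nlinarith
      have : p * (q - (a + c.2)) + p * (a + c.2) = p * q := by
        rw [← Nat.mul_add, Nat.sub_add_cancel hle]
      linarith⟩
    exact (Nat.Coprime.dvd_of_dvd_mul_left hpq this)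
  have hle : p ≤ b + c.1 := Nat.le_of_dvd (by omega) hdvd
  have : q * p ≤ q * (b + c.1) := Nat.mul_le_mul_left q hle
  nlinarith

lemma label_inj {p q : ℕ} (hp : 0 < p) (hq : 0 < q) (hpq : Nat.Coprime p q) :
    Set.InjOn (boxLabel p q) (Rplus p q) := by
  rintro ⟨x1, y1⟩ h1 ⟨x2, y2⟩ h2 heq
  obtain ⟨hx1, hy1, hs1⟩ := h1
  obtain ⟨hx2, hy2, hs2⟩ := h2
  simp only at hx1 hy1 hs1 hx2 hy2 hs2
  unfold boxLabel at heq
  simp only at heq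
  have hs : q * x1 + p * y1 = q * x2 + p * y2 := by omega
  have hb1 := rplus_lt hp hq (c := (x1, y1)) ⟨hx1, hy1, hs1⟩
  have hb2 := rplus_lt hp hq (c := (x2, y2)) ⟨hx2, hy2, hs2⟩
  simp only at hb1 hb2
  have hmod : x1 ≡ x2 [MOD p] := by
    have h1 : q * x1 ≡ q * x2 [MOD p] := by
      have e1 : q * x1 + p * y1 ≡ q * x2 + p * y2 [MOD p] := by rw [hs]
      have e2 : q * x1 + p * y1 ≡ q * x1 [MOD p] := by
        simpa using (Nat.ModEq.refl (q * x1)).add ((Nat.modEq_zero_iff_dvd).2 ⟨y1, rfl⟩)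
      have e3 : q * x2 + p * y2 ≡ q * x2 [MOD p] := by
        simpa using (Nat.ModEq.refl (q * x2)).add ((Nat.modEq_zero_iff_dvd).2 ⟨y2, rfl⟩)
      exact e2.symm.trans (e1.trans e3)
    exact h1.cancel_left_of_coprime (by simpa [Nat.coprime_comm] using hpq)
  have hx : x1 = x2 := by
    have := hmod
    unfold Nat.ModEq at this
    rw [Nat.mod_eq_of_lt hb1.1, Nat.mod_eq_of_lt hb2.1] at this
    exact this
  subst hx
  have : y1 = y2 := by
    have : p * y1 = p * y2 := by omega
    exact Nat.eq_of_mul_eq_mul_left hp this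
  simp [this]

lemma label_surj {p q : ℕ} (hp : 0 < p) (hq : 0 < q) (hpq : Nat.Coprime p q) :
    Set.SurjOn (boxLabel p q) (Rplus p q) ((Gamma p q)ᶜ) := by
  intro n hn
  haveI : NeZero p := ⟨hp.ne'⟩
  have hn' : n ∉ Gamma p q := hn
  have hn0 : n ≠ 0 := by
    rintro rfl
    exact hn' ⟨0, 0, by ring⟩
  set b : ℕ := ((n : ZMod p) * (q : ZMod p)⁻¹).val with hb
  have hblt : b < p := ZMod.val_lt _
  have hunit : IsUnit (q : ZMod p) := by
    rw [ZMod.isUnit_iff_coprime]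
    exact hpq.symm
  have hbq : ((b * q : ℕ) : ZMod p) = (n : ZMod p) := by
    push_cast
    rw [hb, ZMod.natCast_val, ZMod.cast_id]
    rw [mul_assoc, ZMod.inv_mul_of_unit _ hunit, mul_one]
  have hmod : b * q ≡ n [MOD p] := (ZMod.natCast_eq_natCast_iff _ _ _).mp hbq
  rcases le_or_gt (b * q) n with hle | hlt
  · exfalso
    obtain ⟨a, ha⟩ := (Nat.modEq_iff_dvd' hle).mp hmod
    exact hn' ⟨a, b, by rw [mul_comm a p]; omega⟩
  · obtain ⟨m, hm⟩ := (Nat.modEq_iff_dvd' hlt.le).mp hmod.symm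
    have hm1 : 1 ≤ m := by
      rcases Nat.eq_zero_or_pos m with h0 | h
      · subst h0
        simp at hm
        omega
      · exact h
    refine ⟨(p - b, m), ⟨?_, hm1, ?_⟩, ?_⟩
    · simp only
      omega
    · simp only
      have e1 : q * (p - b) + q * b = q * p := by
        rw [← Nat.mul_add, Nat.sub_add_cancel hblt.le]
      have e2 : q * b = b * q := mul_comm q b
      have e3 : q * p = p * q := mul_comm q p
      omega
    · unfold boxLabel
      simp only
      have e1 : q * (p - b) + q * b = q * p := by
        rw [← Nat.mul_add, Nat.sub_add_cancel hblt.le]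
      have e2 : q * b = b * q := mul_comm q b
      have e3 : q * p = p * q := mul_comm q p
      omega

lemma rplus_eq_coe (p q : ℕ) (hp : 0 < p) (hq : 0 < q) :
    Rplus p q = ↑((Finset.Ico 1 p ×ˢ Finset.Ico 1 q).filter
      (fun c => q * c.1 + p * c.2 < p * q)) := by
  ext ⟨x, y⟩
  simp only [Finset.coe_filter, Finset.mem_product, Finset.mem_Ico, Set.mem_setOf_eq]
  constructor
  · intro h
    have hb := rplus_lt hp hq h
    obtain ⟨h1, h2, h3⟩ := h
    exact ⟨⟨⟨h1, hb.1⟩, h2, hb.2⟩, h3⟩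
  · rintro ⟨⟨⟨h1, _⟩, h2, _⟩, h3⟩
    exact ⟨h1, h2, h3⟩

lemma no_boundary {p q : ℕ} (hpq : Nat.Coprime p q) {x y : ℕ}
    (hx1 : 1 ≤ x) (hx2 : x < p) (hy1 : 1 ≤ y) (hy2 : y < q) :
    q * x + p * y ≠ p * q := by
  intro h
  have hd : p ∣ q * x := ⟨q - y, by
    have : p * (q - y) + p * y = p * q := by rw [← Nat.mul_add, Nat.sub_add_cancel hy2.le]
    omega⟩
  have : p ∣ x := hpq.dvd_of_dvd_mul_left hd
  have := Nat.le_of_dvd (by omega) this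
  omega

lemma card_filter {p q : ℕ} (hp : 0 < p) (hq : 0 < q) (hpq : Nat.Coprime p q) :
    2 * ((Finset.Ico 1 p ×ˢ Finset.Ico 1 q).filter
      (fun c => q * c.1 + p * c.2 < p * q)).card = (p - 1) * (q - 1) := by
  set T := Finset.Ico 1 p ×ˢ Finset.Ico 1 q with hT
  have hTcard : T.card = (p - 1) * (q - 1) := by
    rw [hT, Finset.card_product, Nat.card_Ico, Nat.card_Ico]
  have hsplit := Finset.card_filter_add_card_filter_not (s := T)
    (p := fun c => q * c.1 + p * c.2 < p * q)
  have hbij : (T.filter (fun c => ¬ (q * c.1 + p * c.2 < p * q))).card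
      = (T.filter (fun c => q * c.1 + p * c.2 < p * q)).card := by
    apply Finset.card_bij' (fun c _ => (p - c.1, q - c.2)) (fun c _ => (p - c.1, q - c.2))
    · rintro ⟨x, y⟩ hc
      simp only [hT, Finset.mem_filter, Finset.mem_product, Finset.mem_Ico, not_lt] at hc ⊢
      obtain ⟨⟨⟨hx1, hx2⟩, hy1, hy2⟩, hge⟩ := hc
      have hne := no_boundary hpq hx1 hx2 hy1 hy2
      have e1 : q * (p - x) + q * x = q * p := by rw [← Nat.mul_add, Nat.sub_add_cancel hx2.le]
      have e2 : p * (q - y) + p * y = p * q := by rw [← Nat.mul_add, Nat.sub_add_cancel hy2.le]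
      have e3 : q * p = p * q := mul_comm q p
      refine ⟨⟨⟨?_, ?_⟩, ?_, ?_⟩, ?_⟩ <;> omega
    · rintro ⟨x, y⟩ hc
      simp only [hT, Finset.mem_filter, Finset.mem_product, Finset.mem_Ico, not_lt] at hc ⊢
      obtain ⟨⟨⟨hx1, hx2⟩, hy1, hy2⟩, hlt⟩ := hc
      have hne := no_boundary hpq hx1 hx2 hy1 hy2
      have e1 : q * (p - x) + q * x = q * p := by rw [← Nat.mul_add, Nat.sub_add_cancel hx2.le]
      have e2 : p * (q - y) + p * y = p * q := by rw [← Nat.mul_add, Nat.sub_add_cancel hy2.le]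
      have e3 : q * p = p * q := mul_comm q p
      refine ⟨⟨⟨?_, ?_⟩, ?_, ?_⟩, ?_⟩ <;> omega
    · rintro ⟨x, y⟩ hc
      simp only [hT, Finset.mem_filter, Finset.mem_product, Finset.mem_Ico, not_lt] at hc
      obtain ⟨⟨⟨hx1, hx2⟩, hy1, hy2⟩, _⟩ := hc
      simp only [Prod.mk.injEq]
      omega
    · rintro ⟨x, y⟩ hc
      simp only [hT, Finset.mem_filter, Finset.mem_product, Finset.mem_Ico, not_lt] at hc
      obtain ⟨⟨⟨hx1, hx2⟩, hy1, hy2⟩, _⟩ := hc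
      simp only [Prod.mk.injEq]
      omega
  omega


/-- for coprime positive `p, q`, the label map `(x,y) ↦ pq - qx - py` is a
bijection from `R_+^{p,q}` onto `ℕ \ Γ^{p,q}`; in particular both sets have cardinality
`(p-1)(q-1)/2`. -/
theorem stmt_0 (p q : ℕ) (hp : 0 < p) (hq : 0 < q) (hpq : Nat.Coprime p q) :
    Set.BijOn (boxLabel p q) (Rplus p q) ((Gamma p q)ᶜ) ∧
    ((Gamma p q)ᶜ).ncard = (p - 1) * (q - 1) / 2 ∧
    (Rplus p q).ncard = (p - 1) * (q - 1) / 2 := by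
  have hbij : Set.BijOn (boxLabel p q) (Rplus p q) ((Gamma p q)ᶜ) :=
    ⟨fun c hc => label_notMem hp hq hpq hc, label_inj hp hq hpq, label_surj hp hq hpq⟩
  have hrcard : (Rplus p q).ncard = (p - 1) * (q - 1) / 2 := by
    rw [rplus_eq_coe p q hp hq, Set.ncard_coe_finset]
    have := card_filter hp hq hpq
    omega
  refine ⟨hbij, ?_, hrcard⟩
  rw [← hbij.image_eq, Set.ncard_image_of_injOn hbij.injOn, hrcard]
end

section
/- Let p and q be coprime positive integers and Δ a 0-normalized Γ^{p,q}-semi-module. For every integer a, the number of q-cogenerators of Δ that are greater than or equal to a equals |[a, a+q) \ Δ|, the number of integers x with a ≤ x < a+q and x ∉ Δ. -/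
/-- `Δ ⊆ ℕ` viewed as a subset of `ℤ`. -/
def deltaZ (Δ : Set ℕ) : Set ℤ := {z | ∃ m ∈ Δ, (m : ℤ) = z}

/-- The `q`-cogenerators of `Δ`: integers `y` with `y ∉ Δ` and `y + q ∈ Δ`. -/
def qCogen (q : ℕ) (Δ : Set ℕ) : Set ℤ := {y | y ∉ deltaZ Δ ∧ y + (q : ℤ) ∈ deltaZ Δ}

lemma mem_deltaZ_add_q {p q : ℕ} {Δ : Set ℕ} (hΔ : IsSemiModule p q Δ)
    {z : ℤ} (hz : z ∈ deltaZ Δ) : z + (q : ℤ) ∈ deltaZ Δ := by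
  obtain ⟨m, hm, rfl⟩ := hz
  exact ⟨m + q, hΔ.2 m hm q ⟨0, 1, by ring⟩, by push_cast; ring⟩

lemma mem_deltaZ_add_nq {p q : ℕ} {Δ : Set ℕ} (hΔ : IsSemiModule p q Δ)
    {z : ℤ} (hz : z ∈ deltaZ Δ) (k : ℕ) : z + (k : ℤ) * q ∈ deltaZ Δ := by
  induction k with
  | zero => simpa using hz
  | succ n ih =>
      have h := mem_deltaZ_add_q hΔ ih
      have e : z + ((n + 1 : ℕ) : ℤ) * q = z + (n : ℤ) * q + q := by push_cast; ring
      rw [e]; exact h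

lemma exists_add_mul_mem {p q : ℕ} (hp : 0 < p) (hq : 0 < q) (hpq : Nat.Coprime p q)
    {Δ : Set ℕ} (hΔ : IsSemiModule p q Δ) (x : ℤ) :
    ∃ k : ℕ, x + (k : ℤ) * q ∈ deltaZ Δ := by
  have hcop : IsCoprime (p : ℤ) (q : ℤ) := by
    rw [Int.isCoprime_iff_gcd_eq_one]
    simpa using hpq
  obtain ⟨u, v, huv⟩ := hcop
  set t : ℕ := (x * u).natAbs + x.natAbs + 1 with ht
  set m : ℤ := x * u + (t : ℤ) * q with hmdef
  have h1 : -(((x*u).natAbs : ℤ)) ≤ x * u := by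
    rw [← Int.abs_eq_natAbs]; exact neg_abs_le _
  have h2 : x ≤ (x.natAbs : ℤ) := Int.le_natAbs
  have hq1 : (1 : ℤ) ≤ q := by exact_mod_cast hq
  have hp1 : (1 : ℤ) ≤ p := by exact_mod_cast hp
  have ht' : (t : ℤ) = ((x*u).natAbs : ℤ) + (x.natAbs : ℤ) + 1 := by push_cast [ht]; ring
  have htq : (t : ℤ) ≤ (t : ℤ) * q := by nlinarith [Nat.cast_nonneg (α := ℤ) (x*u).natAbs, Nat.cast_nonneg (α := ℤ) x.natAbs]
  have hm0 : 0 ≤ m := by rw [hmdef]; nlinarith [Nat.cast_nonneg (α := ℤ) x.natAbs]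
  have hmx : x ≤ m * p := by nlinarith [Nat.cast_nonneg (α := ℤ) x.natAbs, Nat.cast_nonneg (α := ℤ) (x*u).natAbs]
  have key : m * p - x = (q : ℤ) * ((t : ℤ) * p - x * v) := by
    rw [hmdef]; linear_combination x * huv
  set c : ℤ := (t : ℤ) * p - x * v with hc
  have hc0 : 0 ≤ c := by nlinarith
  refine ⟨c.toNat, ?_⟩
  have hx : x + (c.toNat : ℤ) * q = m * p := by
    rw [Int.toNat_of_nonneg hc0]; linarith [key]
  rw [hx]
  refine ⟨m.toNat * p, ?_, ?_⟩
  · have := hΔ.2 0 hΔ.1 (m.toNat * p) ⟨m.toNat, 0, by ring⟩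
    simpa using this
  · push_cast [Int.toNat_of_nonneg hm0]; ring

/-- for every integer `a`, the number of `q`-cogenerators of `Δ` that are
`≥ a` equals `|[a, a+q) \ Δ|`. -/
theorem stmt_3 (p q : ℕ) (hp : 0 < p) (hq : 0 < q) (hpq : Nat.Coprime p q)
    (Δ : Set ℕ) (hΔ : IsSemiModule p q Δ) (a : ℤ) :
    {y | y ∈ qCogen q Δ ∧ a ≤ y}.ncard = (Set.Ico a (a + (q : ℤ)) \ deltaZ Δ).ncard := by
  have hqz : (0 : ℤ) < q := by exact_mod_cast hq
  set f : ℤ → ℤ := fun y => a + (y - a) % q with hf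
  set S := {y | y ∈ qCogen q Δ ∧ a ≤ y} with hS
  -- at most one cogenerator per residue class
  have huniq : ∀ y1 y2 : ℤ, y1 ∈ qCogen q Δ → y2 ∈ qCogen q Δ →
      (q : ℤ) ∣ y2 - y1 → y1 ≤ y2 → y1 = y2 := by
    intro y1 y2 h1 h2 hd hle
    obtain ⟨d, hd⟩ := hd
    have hd0 : 0 ≤ d := by nlinarith
    rcases eq_or_lt_of_le hd0 with h | h
    · rw [← h, mul_zero] at hd; linarith
    · exfalso
      have h1d : 1 ≤ d := h
      have : y1 + q + ((d - 1).toNat : ℤ) * q ∈ deltaZ Δ :=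
        mem_deltaZ_add_nq hΔ h1.2 _
      rw [Int.toNat_of_nonneg (by omega)] at this
      have hy2 : y1 + q + (d - 1) * q = y2 := by linarith [hd]
      rw [hy2] at this
      exact h2.1 this
  have hinj : Set.InjOn f S := by
    intro y1 h1 y2 h2 hfe
    have hdvd : (q : ℤ) ∣ y2 - y1 := by
      have e1 : (y1 - a) % q = (y2 - a) % q := by
        have h := hfe; simp only [hf] at h; linarith
      have h2 : (q : ℤ) ∣ (y2 - a) - (y1 - a) :=
        Int.dvd_of_emod_eq_zero (by
          rw [Int.sub_emod, ← e1, sub_self, Int.zero_emod])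
      have e2 : (y2 - a) - (y1 - a) = y2 - y1 := by ring
      rwa [e2] at h2
    rcases le_total y1 y2 with h | h
    · exact huniq y1 y2 h1.1 h2.1 hdvd h
    · exact (huniq y2 y1 h2.1 h1.1 (by simpa using hdvd.neg_right) h).symm
  have himg : f '' S = Set.Ico a (a + (q : ℤ)) \ deltaZ Δ := by
    ext x
    constructor
    · rintro ⟨y, ⟨⟨hy1, hy2⟩, hay⟩, rfl⟩
      have hmod0 : 0 ≤ (y - a) % q := Int.emod_nonneg _ (by positivity)
      have hmodlt : (y - a) % q < q := Int.emod_lt_of_pos _ hqz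
      refine ⟨⟨by simp only [hf]; linarith, by simp only [hf]; linarith⟩, ?_⟩
      intro hmem
      have hdivnn : 0 ≤ (y - a) / q := Int.ediv_nonneg (by linarith) (le_of_lt hqz)
      have hrec : f y + (((y - a) / q).toNat : ℤ) * q = y := by
        rw [Int.toNat_of_nonneg hdivnn]
        simp only [hf]
        have h := Int.emod_add_mul_ediv (y - a) q
        linarith [h, mul_comm ((y - a) / (q:ℤ)) (q:ℤ)]
      have := mem_deltaZ_add_nq hΔ hmem ((y - a) / q).toNat
      rw [hrec] at this
      exact hy1 this
    · rintro ⟨⟨hax, hxq⟩, hx⟩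
      obtain ⟨k, hk⟩ := exists_add_mul_mem hp hq hpq hΔ x
      have hex : ∃ k : ℕ, x + (k : ℤ) * q ∈ deltaZ Δ := ⟨k, hk⟩
      classical
      set k0 := Nat.find hex with hk0
      have hk0spec := Nat.find_spec hex
      have hk0pos : k0 ≠ 0 := by
        intro h
        rw [← hk0, h] at hk0spec
        simp at hk0spec
        exact hx hk0spec
      obtain ⟨n, hn⟩ : ∃ n, k0 = n + 1 := ⟨k0 - 1, by omega⟩
      set y := x + (n : ℤ) * q with hy
      have hymem : y ∉ deltaZ Δ := Nat.find_min hex (by omega)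
      have hyq : y + q ∈ deltaZ Δ := by
        have : x + ((n + 1 : ℕ) : ℤ) * q ∈ deltaZ Δ := by rw [← hn]; exact hk0spec
        convert this using 1
        push_cast [hy]; ring
      refine ⟨y, ⟨⟨hymem, hyq⟩, by nlinarith [Int.natCast_nonneg n]⟩, ?_⟩
      have : (y - a) % q = x - a := by
        rw [hy]
        have : x + (n : ℤ) * q - a = (x - a) + (q : ℤ) * n := by ring
        rw [this, Int.add_mul_emod_self_left, Int.emod_eq_of_lt (by linarith) (by linarith)]
      simp only [hf]
      rw [this]; ring
  rw [hS, ← himg, Set.ncard_image_of_injOn hinj]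
end

section
/- Let p and q be coprime positive integers and Δ a 0-normalized Γ^{p,q}-semi-module. Then dim Δ equals the number of pairs (a, b) where a is a p-generator of Δ, b is a q-cogenerator of Δ, and a < b. -/
/-- The `p`-basis of `Δ`: the set `Δ \ (Δ + p)` of `p`-generators of `Δ`. -/
def pBasis (p : ℕ) (Δ : Set ℕ) : Set ℕ := Δ \ ((· + p) '' Δ)

/-- `g(a) = |[a, a + q) \ Δ|`. -/
noncomputable def gInt (q : ℕ) (Δ : Set ℕ) (a : ℕ) : ℕ := (Set.Ico a (a + q) \ Δ).ncard

/-- The dimension of a semi-module: `dim Δ = Σ_{a ∈ p-basis} |[a, a + q) \ Δ|`. -/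
noncomputable def dimDelta (p q : ℕ) (Δ : Set ℕ) : ℕ :=
  ∑ᶠ a ∈ pBasis p Δ, gInt q Δ a

section Aux

variable {p q : ℕ} {Δ : Set ℕ}

lemma delta_add_mul_q (hΔ : IsSemiModule p q Δ) {x : ℕ} (hx : x ∈ Δ) (m : ℕ) :
    x + m * q ∈ Δ := hΔ.2 x hx _ ⟨0, m, by ring⟩

lemma delta_add_mul_p (hΔ : IsSemiModule p q Δ) {x : ℕ} (hx : x ∈ Δ) (m : ℕ) :
    x + m * p ∈ Δ := hΔ.2 x hx _ ⟨m, 0, by ring⟩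

lemma natCast_mem_deltaZ {n : ℕ} : (n : ℤ) ∈ deltaZ Δ ↔ n ∈ Δ := by
  constructor
  · rintro ⟨m, hm, hmn⟩
    rwa [show m = n from Nat.cast_inj.mp hmn] at hm
  · intro h; exact ⟨n, h, rfl⟩

lemma deltaZ_add_mul_q (hΔ : IsSemiModule p q Δ) {z : ℤ} (hz : z ∈ deltaZ Δ) (m : ℕ) :
    z + ((m * q : ℕ) : ℤ) ∈ deltaZ Δ := by
  obtain ⟨n, hn, rfl⟩ := hz
  exact ⟨n + m * q, delta_add_mul_q hΔ hn m, by push_cast; ring⟩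

lemma exists_pmul_eq (hp : 0 < p) (hq : 0 < q) (hpq : Nat.Coprime p q) (x : ℕ) :
    ∃ a m : ℕ, a * p = x + m * q := by
  haveI : NeZero q := ⟨hq.ne'⟩
  set a0 := ((x : ZMod q) * (p : ZMod q)⁻¹).val with ha0
  have h1 : ((a0 * p : ℕ) : ZMod q) = (x : ZMod q) := by
    push_cast
    rw [ha0, ZMod.natCast_val, ZMod.cast_id, mul_assoc, mul_comm ((p : ZMod q))⁻¹,
      ZMod.coe_mul_inv_eq_one p hpq, mul_one]
  have hmod : a0 * p ≡ x [MOD q] := (ZMod.natCast_eq_natCast_iff _ _ _).mp h1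
  have h2 : x ≡ (a0 + x * q) * p [MOD q] := by
    have he : (a0 + x * q) * p = a0 * p + (x * p) * q := by ring
    rw [he]
    exact hmod.symm.trans ((Nat.add_mul_mod_self_right (a0 * p) (x * p) q).symm)
  have hle : x ≤ (a0 + x * q) * p := by
    calc x ≤ x * (q * p) := Nat.le_mul_of_pos_right x (Nat.mul_pos hq hp)
    _ = x * q * p := by ring
    _ ≤ (a0 + x * q) * p := Nat.mul_le_mul_right p (Nat.le_add_left _ _)
  obtain ⟨m, hm⟩ := (Nat.modEq_iff_dvd' hle).mp h2
  exact ⟨a0 + x * q, m, by rw [mul_comm m q]; omega⟩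

lemma gamma_subset_delta (hΔ : IsSemiModule p q Δ) : Gamma p q ⊆ Δ := fun g hg => by
  simpa using hΔ.2 0 hΔ.1 g hg

lemma exists_add_mul_q_mem (hp : 0 < p) (hq : 0 < q) (hpq : Nat.Coprime p q)
    (hΔ : IsSemiModule p q Δ) (x : ℕ) : ∃ m, x + m * q ∈ Δ := by
  obtain ⟨a, m, hm⟩ := exists_pmul_eq hp hq hpq x
  exact ⟨m, hm ▸ gamma_subset_delta hΔ ⟨a, 0, by ring⟩⟩

lemma gInt_eq (hp : 0 < p) (hq : 0 < q) (hpq : Nat.Coprime p q)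
    (hΔ : IsSemiModule p q Δ) {a : ℕ} (ha : a ∈ Δ) :
    gInt q Δ a = {b : ℤ | b ∈ qCogen q Δ ∧ (a : ℤ) < b}.ncard := by
  classical
  have hex : ∀ x ∈ Set.Ico a (a + q) \ Δ, ∃ k, x + (k + 1) * q ∈ Δ := by
    intro x hx
    obtain ⟨m, hm⟩ := exists_add_mul_q_mem hp hq hpq hΔ x
    rcases m with _ | k
    · exact absurd (by simpa using hm) hx.2
    · exact ⟨k, hm⟩
  rw [gInt]
  apply Set.ncard_congr (fun x hx => ((x + Nat.find (hex x hx) * q : ℕ) : ℤ))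
  · intro x hx
    set k := Nat.find (hex x hx) with hk
    have hk1 : x + (k + 1) * q ∈ Δ := Nat.find_spec (hex x hx)
    have hk0 : x + k * q ∉ Δ := by
      rcases Nat.eq_zero_or_pos k with h0 | hpos
      · rw [h0]; simpa using hx.2
      · intro hmem
        exact Nat.find_min (hex x hx) (show k - 1 < k by omega)
          (by rwa [Nat.sub_add_cancel hpos])
    have hax : a < x := lt_of_le_of_ne hx.1.1 (fun h => hx.2 (h ▸ ha))
    refine ⟨⟨?_, ?_⟩, ?_⟩
    · rw [natCast_mem_deltaZ]; exact hk0
    · rw [show ((x + k * q : ℕ) : ℤ) + (q : ℤ) = ((x + (k + 1) * q : ℕ) : ℤ) by push_cast; ring,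
        natCast_mem_deltaZ]
      exact hk1
    · exact_mod_cast Nat.lt_of_lt_of_le hax (Nat.le_add_right x (k * q))
  · intro x y hx hy hxy
    have h : x + Nat.find (hex x hx) * q = y + Nat.find (hex y hy) * q := Nat.cast_inj.mp hxy
    have key : ∀ u v : ℕ, ∀ (hu : u ∈ Set.Ico a (a + q) \ Δ) (hv : v ∈ Set.Ico a (a + q) \ Δ),
        u ≤ v → u + Nat.find (hex u hu) * q = v + Nat.find (hex v hv) * q → u = v := by
      intro u v hu hv huv he
      have hsub : v - u = (Nat.find (hex u hu) - Nat.find (hex v hv)) * q := by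
        rw [Nat.sub_mul]; omega
      have hdvd : q ∣ v - u := hsub ▸ dvd_mul_left q _
      have hlt : v - u < q := by
        have h1 := hu.1.1; have h2 := hv.1.2
        omega
      have := Nat.eq_zero_of_dvd_of_lt hdvd hlt
      omega
    rcases le_total x y with h' | h'
    · exact key x y hx hy h' h
    · exact (key y x hy hx h' h.symm).symm
  · rintro b ⟨⟨hb1, hb2⟩, hab⟩
    have hb0 : 0 ≤ b := le_trans (Int.natCast_nonneg a) hab.le
    lift b to ℕ using hb0 with n
    have hn1 : n ∉ Δ := fun h => hb1 (natCast_mem_deltaZ.mpr h)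
    have hn2 : n + q ∈ Δ := by
      rw [show (n : ℤ) + (q : ℤ) = ((n + q : ℕ) : ℤ) by push_cast; ring] at hb2
      exact natCast_mem_deltaZ.mp hb2
    have han : a < n := by exact_mod_cast hab
    set r := n - (a + 1) with hr
    set x := a + 1 + r % q with hxdef
    set j := r / q with hj
    have hnx : n = x + j * q := by
      have hdm := Nat.div_add_mod' r q
      rw [← hj] at hdm
      omega
    have hxne : x ∉ Δ := fun hmem => hn1 (hnx ▸ delta_add_mul_q hΔ hmem j)
    have hmq : r % q < q := Nat.mod_lt _ hq
    have haq : a + q ∈ Δ := by simpa using delta_add_mul_q hΔ ha 1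
    have hxlt : x < a + q := by
      have hle : x ≤ a + q := by omega
      rcases hle.lt_or_eq with h | h
      · exact h
      · exact absurd (h ▸ haq) hxne
    have hxmem : x ∈ Set.Ico a (a + q) \ Δ := ⟨⟨by omega, hxlt⟩, hxne⟩
    refine ⟨x, hxmem, ?_⟩
    set k := Nat.find (hex x hxmem) with hk
    have hk1 : x + (k + 1) * q ∈ Δ := Nat.find_spec (hex x hxmem)
    have hkj : k ≤ j := by
      apply Nat.find_min' (hex x hxmem)
      rw [show x + (j + 1) * q = n + q by rw [hnx]; ring]
      exact hn2
    have hkj' : ¬ k < j := by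
      intro hlt
      obtain ⟨t, ht⟩ : ∃ t, j = (k + 1) + t := ⟨j - (k + 1), by omega⟩
      apply hn1
      rw [hnx, ht, show x + (k + 1 + t) * q = (x + (k + 1) * q) + t * q by ring]
      exact delta_add_mul_q hΔ hk1 t
    have hkeq : k = j := by omega
    show ((x + k * q : ℕ) : ℤ) = (n : ℤ)
    rw [hkeq, ← hnx]

lemma qCogen_finite (hq : 0 < q) (hΔ : IsSemiModule p q Δ) : (qCogen q Δ).Finite := by
  haveI : NeZero q := ⟨hq.ne'⟩
  apply Set.Finite.of_finite_image (f := fun b : ℤ => (b : ZMod q)) (Set.toFinite _)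
  have key : ∀ u v : ℤ, u ∈ qCogen q Δ → v ∈ qCogen q Δ → u ≤ v →
      ((u : ZMod q) = (v : ZMod q)) → u = v := by
    intro u v hu hv huv he
    have hdvd : (q : ℤ) ∣ v - u := ((ZMod.intCast_eq_intCast_iff _ _ _).mp he).dvd
    obtain ⟨c, hc⟩ := hdvd
    have hq' : (0 : ℤ) < q := by exact_mod_cast hq
    have hc0 : 0 ≤ c := by nlinarith
    lift c to ℕ using hc0
    rcases Nat.eq_zero_or_pos c with h0 | hpos
    · subst h0; simp at hc; omega
    · exfalso
      obtain ⟨c', rfl⟩ : ∃ c', c = c' + 1 := ⟨c - 1, by omega⟩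
      apply hv.1
      have hmem := deltaZ_add_mul_q hΔ hu.2 c'
      have hveq : v = u + (q : ℤ) + ((c' * q : ℕ) : ℤ) := by push_cast at hc ⊢; linarith
      rwa [← hveq] at hmem
  intro u hu v hv he
  rcases le_total u v with h | h
  · exact key u v hu hv h he
  · exact (key v u hv hu h he.symm).symm

lemma pBasis_finite (hp : 0 < p) (hΔ : IsSemiModule p q Δ) : (pBasis p Δ).Finite := by
  haveI : NeZero p := ⟨hp.ne'⟩
  apply Set.Finite.of_finite_image (f := fun a : ℕ => (a : ZMod p)) (Set.toFinite _)
  have key : ∀ u v : ℕ, u ∈ pBasis p Δ → v ∈ pBasis p Δ → u ≤ v →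
      ((u : ZMod p) = (v : ZMod p)) → u = v := by
    intro u v hu hv huv he
    have hmod : u ≡ v [MOD p] := (ZMod.natCast_eq_natCast_iff _ _ _).mp he
    obtain ⟨c, hc⟩ := (Nat.modEq_iff_dvd' huv).mp hmod
    have hveq : v = u + p * c := by omega
    rcases c with _ | c'
    · simp at hveq; omega
    · exfalso
      apply hv.2
      refine ⟨u + c' * p, delta_add_mul_p hΔ hu.1 c', ?_⟩
      show u + c' * p + p = v
      rw [hveq]; ring
  intro u hu v hv he
  rcases le_total u v with h | h
  · exact key u v hu hv h he
  · exact (key v u hv hu h he.symm).symm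

end Aux

/-- `dim Δ` equals the number of pairs `(a, b)` with `a` a `p`-generator of
`Δ`, `b` a `q`-cogenerator of `Δ`, and `a < b`. -/
theorem stmt_4 (p q : ℕ) (hp : 0 < p) (hq : 0 < q) (hpq : Nat.Coprime p q)
    (Δ : Set ℕ) (hΔ : IsSemiModule p q Δ) :
    dimDelta p q Δ =
      {ab : ℕ × ℤ | ab.1 ∈ pBasis p Δ ∧ ab.2 ∈ qCogen q Δ ∧ (ab.1 : ℤ) < ab.2}.ncard := by
  classical
  have hPfin := pBasis_finite hp hΔ
  have hCfin := qCogen_finite hq hΔ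
  set P := hPfin.toFinset with hP
  set C := hCfin.toFinset with hC
  have h1 : dimDelta p q Δ = ∑ a ∈ P, gInt q Δ a := by
    rw [dimDelta, ← hPfin.coe_toFinset, finsum_mem_coe_finset]
  have h2 : ∀ a ∈ P, gInt q Δ a = (C.filter (fun b => (a : ℤ) < b)).card := by
    intro a haP
    have ha : a ∈ Δ := (hPfin.mem_toFinset.mp haP).1
    rw [gInt_eq hp hq hpq hΔ ha]
    have hs : {b : ℤ | b ∈ qCogen q Δ ∧ (a : ℤ) < b} = ↑(C.filter (fun b => (a : ℤ) < b)) := by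
      ext b
      simp [hC, Set.Finite.mem_toFinset]
    rw [hs, Set.ncard_coe_finset]
  set F := (P ×ˢ C).filter (fun ab : ℕ × ℤ => (ab.1 : ℤ) < ab.2) with hF
  have h3 : {ab : ℕ × ℤ | ab.1 ∈ pBasis p Δ ∧ ab.2 ∈ qCogen q Δ ∧ (ab.1 : ℤ) < ab.2} = ↑F := by
    ext ⟨u, v⟩
    simp [hF, Finset.mem_filter, Finset.mem_product, hP, hC, Set.Finite.mem_toFinset, and_assoc]
  rw [h3, Set.ncard_coe_finset, h1]
  have h4 : F.card = ∑ a ∈ P, (F.filter (fun ab => ab.1 = a)).card :=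
    Finset.card_eq_sum_card_fiberwise (fun ab hab => by
      simp only [hF, Finset.mem_coe, Finset.mem_filter, Finset.mem_product] at hab
      exact hab.1.1)
  rw [h4]
  apply Finset.sum_congr rfl
  intro a haP
  rw [h2 a haP]
  apply Finset.card_bij (fun b _ => (a, b))
  · intro b hb
    simp only [Finset.mem_filter] at hb ⊢
    simp only [hF, Finset.mem_filter, Finset.mem_product]
    exact ⟨⟨⟨haP, hb.1⟩, hb.2⟩, trivial⟩
  · intro b hb b' hb' he
    exact (Prod.mk.injEq _ _ _ _).mp he |>.2
  · intro ab hab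
    simp only [hF, Finset.mem_filter, Finset.mem_product] at hab
    refine ⟨ab.2, ?_, ?_⟩
    · simp only [Finset.mem_filter]
      exact ⟨hab.1.1.2, hab.2 ▸ hab.1.2⟩
    · rw [← hab.2]
end

section
/- Let p and q be coprime positive integers and m a positive integer with m < p. Then for every integer A, the number of integers x with A < x ≤ A + q such that x is congruent modulo p to jq for some j ∈ {0, 1, …, m−1} is at least ⌊mq/p⌋. -/
/-- for coprime positive `p, q` and `0 < m < p`, any interval `(A, A+q]` of
integers contains at least `⌊mq/p⌋` integers congruent modulo `p` to `jq` for some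
`0 ≤ j < m`. -/
theorem stmt_6 (p q : ℕ) (hp : 0 < p) (hq : 0 < q) (hpq : Nat.Coprime p q)
    (m : ℕ) (hm : 0 < m) (hmp : m < p) (A : ℤ) :
    (m * q / p : ℕ) ≤
      {x : ℤ | A < x ∧ x ≤ A + (q : ℤ) ∧
        ∃ j : ℕ, j < m ∧ x ≡ (j : ℤ) * q [ZMOD (p : ℤ)]}.ncard := by
  set S : Set ℤ := {x : ℤ | A < x ∧ x ≤ A + (q : ℤ) ∧
        ∃ j : ℕ, j < m ∧ x ≡ (j : ℤ) * q [ZMOD (p : ℤ)]} with hS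
  have hp' : (0 : ℤ) < (p : ℤ) := by exact_mod_cast hp
  have hq' : (0 : ℤ) < (q : ℤ) := by exact_mod_cast hq
  -- the domain of multiples of p, described by their quotients
  set B : ℤ := A - ((m : ℤ) - 1) * q with hB
  set D : Finset ℤ := Finset.Ioc (B / p) ((A + q) / p) with hD
  set ψ : ℤ → ℤ := fun k => p * k + q * ((A + q - p * k) / q) with hψ
  -- basic facts about e = A + q - p * k for k ∈ D
  have hke : ∀ k ∈ D, 0 ≤ A + q - p * k ∧ A + q - p * k < m * q := by
    intro k hk
    rw [hD, Finset.mem_Ioc] at hk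
    constructor
    · have h1 : (p : ℤ) * k ≤ p * ((A + q) / p) :=
        mul_le_mul_of_nonneg_left hk.2 (le_of_lt hp')
      have h2 : ((A + q) / p) * p ≤ A + q := Int.ediv_mul_le _ (ne_of_gt hp')
      nlinarith
    · have h1 : B / p + 1 ≤ k := hk.1
      have h2 : B < (B / p + 1) * p := Int.lt_ediv_add_one_mul_self B hp'
      have h3 : (B / p + 1) * p ≤ k * p :=
        mul_le_mul_of_nonneg_right h1 (le_of_lt hp')
      have : B < p * k := by nlinarith
      have hmq : B + (m : ℤ) * q = A + q := by rw [hB]; ring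
      linarith
  -- ψ maps D into S
  have hmem : ∀ k ∈ D, ψ k ∈ S := by
    intro k hk
    obtain ⟨he0, hem⟩ := hke k hk
    set e : ℤ := A + q - p * k with hE
    have hdm : e = q * (e / q) + e % q := (Int.mul_ediv_add_emod e q).symm
    have hr0 : 0 ≤ e % q := Int.emod_nonneg e (ne_of_gt hq')
    have hrq : e % q < q := Int.emod_lt_of_pos e hq'
    have hψk : ψ k = A + q - e % q := by
      rw [hψ]; simp only []
      rw [← hE] at *
      omega
    have ht0 : 0 ≤ e / q := Int.ediv_nonneg he0 (le_of_lt hq')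
    have htm : e / q < m := by
      rw [Int.ediv_lt_iff_lt_mul hq']
      exact hem
    refine ⟨by omega, by omega, (e / q).toNat, ?_, ?_⟩
    · omega
    · have hcast : ((e / q).toNat : ℤ) = e / q := Int.toNat_of_nonneg ht0
      have : ψ k - ((e / q).toNat : ℤ) * q = p * k := by
        rw [hcast, hψ]; ring
      have hd : (p : ℤ) ∣ (((e / q).toNat : ℤ) * q - ψ k) := ⟨-k, by linarith [this]⟩
      exact Int.modEq_iff_dvd.mpr hd
  -- ψ is injective on D
  have hinj : Set.InjOn ψ D := by
    intro k1 hk1 k2 hk2 heq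
    obtain ⟨h10, h1m⟩ := hke k1 hk1
    obtain ⟨h20, h2m⟩ := hke k2 hk2
    set t1 : ℤ := (A + q - p * k1) / q with ht1
    set t2 : ℤ := (A + q - p * k2) / q with ht2
    have ht10 : 0 ≤ t1 := Int.ediv_nonneg h10 (le_of_lt hq')
    have ht1m : t1 < m := (Int.ediv_lt_iff_lt_mul hq').mpr h1m
    have ht20 : 0 ≤ t2 := Int.ediv_nonneg h20 (le_of_lt hq')
    have ht2m : t2 < m := (Int.ediv_lt_iff_lt_mul hq').mpr h2m
    have hkey : (p : ℤ) * (k1 - k2) = q * (t2 - t1) := by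
      have : (p : ℤ) * k1 + q * t1 = p * k2 + q * t2 := heq
      ring_nf
      ring_nf at this
      linarith
    have hdvd : (p : ℤ) ∣ (q : ℤ) * (t2 - t1) := ⟨k1 - k2, hkey.symm⟩
    have hcop : IsCoprime (p : ℤ) (q : ℤ) :=
      Int.isCoprime_iff_gcd_eq_one.mpr (by simpa using hpq)
    have hdt : (p : ℤ) ∣ (t2 - t1) := hcop.dvd_of_dvd_mul_left hdvd
    have ht : t2 - t1 = 0 := by
      refine Int.eq_zero_of_abs_lt_dvd hdt ?_
      have : (m : ℤ) < p := by exact_mod_cast hmp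
      rw [abs_lt]; omega
    have : (p : ℤ) * (k1 - k2) = 0 := by rw [hkey, ht]; ring
    have := mul_eq_zero.mp this
    omega
  -- finiteness of S
  have hSfin : S.Finite := by
    apply Set.Finite.subset (Set.finite_Ioc A (A + q))
    intro x hx
    exact Set.mem_Ioc.mpr ⟨hx.1, hx.2.1⟩
  -- conclude
  have himg : ↑(D.image ψ) ⊆ S := by
    intro x hx
    simp only [Finset.coe_image, Set.mem_image, Finset.mem_coe] at hx
    obtain ⟨k, hk, rfl⟩ := hx
    exact hmem k hk
  have hcard1 : (D.image ψ).card ≤ S.ncard := by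
    rw [← Set.ncard_coe_finset]
    exact Set.ncard_le_ncard himg hSfin
  have hcard2 : (D.image ψ).card = D.card := Finset.card_image_of_injOn hinj
  have hDcard : D.card = ((A + q) / p - B / p).toNat := Int.card_Ioc _ _
  -- floor inequality
  have hfloor : ((m : ℤ) * q) / p ≤ (A + q) / p - B / p := by
    have hsum : B / p + ((m : ℤ) * q) / p ≤ (A + q) / p := by
      rw [Int.le_ediv_iff_mul_le hp']
      have e1 : (B / p) * p ≤ B := Int.ediv_mul_le B (ne_of_gt hp')
      have e2 : (((m : ℤ) * q) / p) * p ≤ (m : ℤ) * q := Int.ediv_mul_le _ (ne_of_gt hp')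
      have hmq : B + (m : ℤ) * q = A + q := by rw [hB]; ring
      nlinarith
    linarith
  have hcast : ((m * q / p : ℕ) : ℤ) = ((m : ℤ) * q) / (p : ℤ) := by
    push_cast [Int.natCast_ediv]
    norm_num
  omega
end

section
/- Let p and q be coprime positive integers, Δ a 0-normalized Γ^{p,q}-semi-module with p-basis 0 = a_0 < a_1 < … < a_{p-1}. Then for every k with 1 ≤ k ≤ p one has g(a_{k−1}) ≤ q − ⌈kq/p⌉. Consequently, the Young diagram D'(Δ) with columns g(a_0), g(a_1), …, g(a_{p-1}) is contained in R_+^{p,q}. -/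
private def clz (P x : ℤ) : ℤ := (x + P - 1) / P

private def ceQ (P x : ℤ) : ℤ := clz P (max x 0)

private lemma clz_add_mul {P : ℤ} (hP : 0 < P) (x t : ℤ) :
    clz P (x + P * t) = clz P x + t := by
  unfold clz
  rw [show x + P * t + P - 1 = x + P - 1 + P * t by ring,
    Int.add_mul_ediv_left _ _ hP.ne']

private lemma clz_mono {P : ℤ} (hP : 0 < P) {x y : ℤ} (h : x ≤ y) :
    clz P x ≤ clz P y :=
  Int.ediv_le_ediv hP (by omega)

private lemma clz_zero {P : ℤ} (hP : 0 < P) : clz P 0 = 0 := by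
  unfold clz
  rw [zero_add, Int.ediv_eq_zero_of_lt (by omega) (by omega)]

private lemma clz_nonneg {P : ℤ} (hP : 0 < P) {x : ℤ} (hx : 0 ≤ x) : 0 ≤ clz P x :=
  (clz_zero hP) ▸ clz_mono hP hx

private lemma clz_superadd {P : ℤ} (hP : 0 < P) (x y : ℤ) :
    clz P (x + y) ≤ clz P x + clz P y := by
  have hx := Int.mul_ediv_add_emod (x + P - 1) P
  have hx2 := Int.emod_nonneg (x + P - 1) hP.ne'
  have hx3 := Int.emod_lt_of_pos (x + P - 1) hP
  have hy := Int.mul_ediv_add_emod (y + P - 1) P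
  have hy2 := Int.emod_nonneg (y + P - 1) hP.ne'
  have hy3 := Int.emod_lt_of_pos (y + P - 1) hP
  show (x + y + P - 1) / P ≤ (x + P - 1) / P + (y + P - 1) / P
  set c := (x + P - 1) / P with hc
  set d := (y + P - 1) / P with hd
  have h1 : x + y + P - 1 ≤ P - 1 + P * (c + d) := by
    have : P * (c + d) = P * c + P * d := by ring
    omega
  calc (x + y + P - 1) / P ≤ (P - 1 + P * (c + d)) / P := Int.ediv_le_ediv hP h1
    _ = (P - 1) / P + (c + d) := Int.add_mul_ediv_left _ _ hP.ne'
    _ = c + d := by rw [Int.ediv_eq_zero_of_lt (by omega) (by omega)]; ring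


private lemma clz_natCast {p : ℕ} (hp : 0 < p) (m : ℕ) :
    (((m + p - 1)/p : ℕ) : ℤ) = clz p m := by
  rw [Int.natCast_ediv]
  unfold clz
  congr 1
  push_cast
  omega

open Finset in
private theorem chain_ineq (P Q : ℤ) (hP : 0 < P) (hQ : 0 ≤ Q) (e : ℕ → ℤ) (he0 : e 0 = 0)
    (hstep : ∀ j, e (j+1) ≤ e j + Q) (hcong : ∀ j, P ∣ e j + Q - e (j+1)) (L : ℕ) :
    clz P ((((range L).filter (fun j => 0 ≤ e j)).card : ℤ) * Q) ≤
      ∑ j ∈ range L, (ceQ P (e j + Q) - ceQ P (e j)) := by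
  classical
  suffices H : ∀ M : ℕ,
      (if 0 ≤ e M then clz P ((((range M).filter (fun j => 0 ≤ e j)).card : ℤ) * Q - e M)
          + clz P (e M)
        else clz P ((((range M).filter (fun j => 0 ≤ e j)).card : ℤ) * Q)) ≤
      ∑ j ∈ range M, (ceQ P (e j + Q) - ceQ P (e j)) by
    have hL := H L
    set k : ℤ := (((range L).filter (fun j => 0 ≤ e j)).card : ℤ)
    by_cases h : 0 ≤ e L
    · rw [if_pos h] at hL
      refine le_trans ?_ hL
      calc clz P (k * Q) = clz P (k * Q - e L + e L) := by ring_nf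
        _ ≤ clz P (k * Q - e L) + clz P (e L) := clz_superadd hP _ _
    · rwa [if_neg h] at hL
  intro M
  induction M with
  | zero =>
    simp only [range_zero, filter_empty, card_empty, sum_empty, he0, Nat.cast_zero, zero_mul,
      zero_sub, neg_zero, le_refl, if_pos, clz_zero hP]
    omega
  | succ M ih =>
    rw [sum_range_succ]
    set k : ℤ := (((range M).filter (fun j => 0 ≤ e j)).card : ℤ) with hk
    have hkcard : ((((range (M+1)).filter (fun j => 0 ≤ e j)).card : ℕ) : ℤ)
        = k + (if 0 ≤ e M then 1 else 0) := by
      rw [range_add_one, filter_insert]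
      split
      · rw [card_insert_of_notMem (by simp)]; push_cast; ring
      · simp [hk]
    by_cases h1 : 0 ≤ e M
    · rw [if_pos h1] at ih
      have hk1 : ((((range (M+1)).filter (fun j => 0 ≤ e j)).card : ℕ) : ℤ) = k + 1 := by
        rw [hkcard, if_pos h1]
      have hterm : ceQ P (e M + Q) - ceQ P (e M) = clz P (e M + Q) - clz P (e M) := by
        unfold ceQ
        rw [max_eq_left h1, max_eq_left (by omega)]
      obtain ⟨t, ht⟩ := hcong M
      have htnn : 0 ≤ t := by nlinarith [hstep M]
      have heq1 : clz P (e M + Q) = clz P (e (M+1)) + t := by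
        rw [show e M + Q = e (M+1) + P * t by omega, clz_add_mul hP]
      by_cases h2 : 0 ≤ e (M+1)
      · rw [if_pos h2, hk1]
        have heq2 : clz P ((k + 1) * Q - e (M+1)) = clz P (k * Q - e M) + t := by
          rw [show (k+1) * Q - e (M+1) = (k * Q - e M) + P * t by linear_combination ht,
            clz_add_mul hP]
        rw [heq2, hterm, heq1]
        omega
      · rw [if_neg h2, hk1]
        have hsup : clz P ((k+1) * Q) ≤ clz P (k * Q - e M) + clz P (e M + Q) := by
          calc clz P ((k+1)*Q) = clz P ((k * Q - e M) + (e M + Q)) := by ring_nf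
            _ ≤ _ := clz_superadd hP _ _
        rw [hterm]
        omega
    · rw [if_neg h1] at ih
      have hk1 : ((((range (M+1)).filter (fun j => 0 ≤ e j)).card : ℕ) : ℤ) = k := by
        rw [hkcard, if_neg h1]; ring
      have hterm : ceQ P (e M + Q) - ceQ P (e M) = ceQ P (e M + Q) := by
        unfold ceQ
        rw [max_eq_right (le_of_not_ge h1), clz_zero hP]; ring
      have htnn : 0 ≤ ceQ P (e M + Q) := clz_nonneg hP (le_max_right _ _)
      by_cases h2 : 0 ≤ e (M+1)
      · rw [if_pos h2, hk1]
        have hb : clz P (e (M+1)) ≤ ceQ P (e M + Q) := by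
          unfold ceQ
          exact clz_mono hP (le_max_of_le_left (hstep M))
        have hc : clz P (k * Q - e (M+1)) ≤ clz P (k * Q) := clz_mono hP (by omega)
        rw [hterm]
        omega
      · rw [if_neg h2, hk1]
        rw [hterm]
        omega

open Finset in
private lemma count_AP {p : ℕ} (hp : 0 < p) (v lo hi : ℕ) (hlohi : lo ≤ hi)
    [DecidablePred fun x : ℕ => ∃ t, x = v + t * p] :
    (((Finset.Ico lo hi).filter (fun x => ∃ t, x = v + t * p)).card : ℤ)
      = ceQ p ((hi : ℤ) - v) - ceQ p ((lo : ℤ) - v) := by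
  have key : ∀ m t : ℕ, ((m + p - 1) / p ≤ t ↔ m ≤ t * p) := by
    intro m t
    rw [Nat.div_le_iff_le_mul_add_pred hp, mul_comm t p]
    generalize p * t = w
    omega
  have himg : (Finset.Ico lo hi).filter (fun x => ∃ t, x = v + t * p)
      = (Finset.Ico ((lo - v + p - 1)/p) ((hi - v + p - 1)/p)).image (fun t => v + t * p) := by
    ext x
    simp only [mem_filter, mem_Ico, mem_image]
    constructor
    · rintro ⟨⟨hlo, hhi⟩, t, rfl⟩
      refine ⟨t, ⟨?_, ?_⟩, rfl⟩
      · rw [key]; omega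
      · by_contra hcon
        push_neg at hcon
        rw [key] at hcon
        omega
    · rintro ⟨t, ⟨h1, h2⟩, rfl⟩
      rw [key] at h1
      have h2' : ¬ ((hi - v + p - 1)/p ≤ t) := by omega
      rw [key] at h2'
      exact ⟨⟨by omega, by omega⟩, t, rfl⟩
  rw [himg, Finset.card_image_of_injective _ (fun s t hst => Nat.eq_of_mul_eq_mul_right hp (by omega)),
    Nat.card_Ico]
  have cast1 : ∀ m : ℕ, (((m + p - 1)/p : ℕ) : ℤ) = clz p (m : ℤ) := by
    intro m
    rw [Int.natCast_ediv]
    unfold clz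
    congr 1
    push_cast
    omega
  have hmono : (lo - v + p - 1)/p ≤ (hi - v + p - 1)/p := Nat.div_le_div_right (by omega)
  rw [Nat.cast_sub hmono, cast1, cast1]
  unfold ceQ
  congr 2 <;> omega

section
open Finset

/-- if `0 = a_0 < a_1 < … < a_{p-1}` is the `p`-basis of `Δ`, then
`g(a_{k-1}) ≤ q - ⌈kq/p⌉` for all `1 ≤ k ≤ p` (here `k = i + 1` for `i : Fin p`);
consequently the diagram `D'(Δ)` with columns `g(a_0), …, g(a_{p-1})` is contained in
`R_+^{p,q}`. -/
theorem stmt_7 (p q : ℕ) (hp : 0 < p) (hq : 0 < q) (hpq : Nat.Coprime p q)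
    (Δ : Set ℕ) (hΔ : IsSemiModule p q Δ)
    (a : Fin p → ℕ) (ha : StrictMono a) (hrange : Set.range a = pBasis p Δ) :
    (∀ i : Fin p, gInt q Δ (a i) ≤ q - ⌈(((i : ℕ) + 1) * q : ℚ) / (p : ℚ)⌉₊) ∧
    {c : ℕ × ℕ | ∃ i : Fin p, c.1 = (i : ℕ) + 1 ∧ 1 ≤ c.2 ∧ c.2 ≤ gInt q Δ (a i)} ⊆
      Rplus p q := by
  classical
  haveI : NeZero p := ⟨hp.ne'⟩
  obtain ⟨h0Δ, hclosed⟩ := hΔ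
  have hPmem : ∀ x ∈ Δ, x + p ∈ Δ := fun x hx => hclosed x hx p ⟨1, 0, by ring⟩
  have hQmem : ∀ x ∈ Δ, x + q ∈ Δ := fun x hx => hclosed x hx q ⟨0, 1, by ring⟩
  have htp : ∀ x ∈ Δ, ∀ t : ℕ, x + t * p ∈ Δ := by
    intro x hx t
    induction t with
    | zero => simpa using hx
    | succ t ih => rw [show x + (t+1) * p = (x + t * p) + p by ring]; exact hPmem _ ih
  have haΔ : ∀ m : Fin p, a m ∈ Δ := fun m => (hrange ▸ Set.mem_range_self m).1
  have haB : ∀ m : Fin p, a m ∈ pBasis p Δ := fun m => hrange ▸ Set.mem_range_self m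
  have hdecomp : ∀ x, x ∈ Δ → ∃ (m : Fin p) (t : ℕ), x = a m + t * p := by
    intro x
    induction x using Nat.strong_induction_on with
    | _ x ih =>
      intro hx
      by_cases hb : x ∈ (· + p) '' Δ
      · obtain ⟨y, hy, hyx⟩ := hb
        simp only at hyx
        obtain ⟨m, t, rfl⟩ := ih y (by omega) hy
        exact ⟨m, t + 1, by rw [← hyx]; ring⟩
      · have hxB : x ∈ pBasis p Δ := ⟨hx, hb⟩
        rw [← hrange] at hxB
        obtain ⟨m, hm⟩ := hxB
        exact ⟨m, 0, by omega⟩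
  -- injectivity of residues of the basis
  have hfinj : Function.Injective (fun m : Fin p => ((a m : ZMod p))) := by
    have hND : ∀ m m' : Fin p, a m < a m' → ((a m : ZMod p) = (a m' : ZMod p)) → False := by
      intro m m' hlt heq
      have hmod : a m ≡ a m' [MOD p] := (ZMod.natCast_eq_natCast_iff _ _ _).mp heq
      obtain ⟨c, hc⟩ := (Nat.modEq_iff_dvd' hlt.le).mp hmod
      rcases c with _ | c
      · omega
      · have hmem : a m + c * p + p ∈ (· + p) '' Δ := ⟨a m + c * p, htp _ (haΔ m) _, rfl⟩
        have h2 : a m' = a m + c * p + p := by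
          have h3 : p * (c + 1) = c * p + p := by ring
          omega
        rw [← h2] at hmem
        exact (haB m').2 hmem
    intro m m' hmm'
    by_contra hne
    rcases lt_trichotomy m m' with h | h | h
    · exact hND m m' (ha h) hmm'
    · exact hne h
    · exact hND m' m (ha h) hmm'.symm
  have hfbij : Function.Bijective (fun m : Fin p => ((a m : ZMod p))) :=
    (Fintype.bijective_iff_injective_and_card _).mpr ⟨hfinj, by simp [ZMod.card]⟩
  set E := Equiv.ofBijective _ hfbij with hE
  set g : ZMod p → ℕ := fun r => a (E.symm r) with hg
  have hgclass : ∀ r : ZMod p, ((g r : ℕ) : ZMod p) = r := fun r => E.apply_symm_apply r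
  have hgΔ : ∀ r, g r ∈ Δ := fun r => haΔ _
  have hga : ∀ m : Fin p, g ((a m : ZMod p)) = a m := by
    intro m
    have : E.symm (E m) = m := E.symm_apply_apply m
    simp only [hg]
    rw [show ((a m : ZMod p)) = E m from rfl, this]
  have hgmin : ∀ x ∈ Δ, g ((x : ZMod p)) ≤ x := by
    intro x hx
    obtain ⟨m, t, rfl⟩ := hdecomp x hx
    have hcast : (((a m + t * p : ℕ)) : ZMod p) = ((a m : ZMod p)) := by
      push_cast [ZMod.natCast_self]
      ring
    rw [hcast, hga]
    omega
  have hgchain : ∀ r : ZMod p, g (r + (q : ZMod p)) ≤ g r + q := by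
    intro r
    have h1 := hgmin (g r + q) (hQmem _ (hgΔ r))
    have hcast : (((g r + q : ℕ)) : ZMod p) = r + (q : ZMod p) := by
      push_cast [hgclass]
      ring
    rwa [hcast] at h1
  set u : (ZMod p)ˣ := ZMod.unitOfCoprime q hpq.symm with hu
  have huq : ((u : (ZMod p)ˣ) : ZMod p) = (q : ZMod p) := ZMod.coe_unitOfCoprime q hpq.symm
  have key : ∀ i : Fin p,
      (((i:ℕ)+1) * q + p - 1)/p ≤ ((Finset.Ico (a i) (a i + q)).filter (· ∈ Δ)).card := by
    intro i
    set ai := a i with hai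
    set ρ : ZMod p := (ai : ZMod p) with hρ
    set r : ℕ → ZMod p := fun j => ρ - (j : ZMod p) * (q : ZMod p) with hr
    set e : ℕ → ℤ := fun j => (ai : ℤ) - g (r j) with he
    have hr0 : r 0 = ρ := by simp [hr]
    have hgρ : g ρ = ai := hga i
    have he0 : e 0 = 0 := by rw [he]; simp only [hr0, hgρ]; ring
    have hrel : ∀ j : ℕ, r j = r (j+1) + (q : ZMod p) := by
      intro j
      simp only [hr]
      push_cast
      ring
    have hstep : ∀ j, e (j+1) ≤ e j + q := by
      intro j
      have h1 := hgchain (r (j+1))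
      rw [← hrel j] at h1
      simp only [he]
      omega
    have hcong : ∀ j, (p : ℤ) ∣ e j + q - e (j+1) := by
      intro j
      apply (ZMod.intCast_zmod_eq_zero_iff_dvd _ p).mp
      have h2 : e j + (q:ℤ) - e (j+1) = ((g (r (j+1)) : ℤ)) + q - (g (r j)) := by
        simp only [he]; ring
      rw [h2]
      push_cast [hgclass]
      rw [hrel j]
      ring
    have hlohi : ai ≤ ai + q := Nat.le_add_right _ _
    set D := (Finset.Ico ai (ai + q)).filter (· ∈ Δ) with hD
    set Wj : ℕ → Finset ℕ :=
      fun j => (Finset.Ico ai (ai + q)).filter (fun x => ∃ t, x = g (r j) + t * p) with hW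
    have hWD : ∀ j, Wj j ⊆ D := by
      intro j x hx
      simp only [hW, Finset.mem_filter] at hx
      obtain ⟨hxI, t, rfl⟩ := hx
      simp only [hD, Finset.mem_filter]
      exact ⟨hxI, htp _ (hgΔ _) _⟩
    have hclassW : ∀ j x, x ∈ Wj j → (x : ZMod p) = r j := by
      intro j x hx
      simp only [hW, Finset.mem_filter] at hx
      obtain ⟨-, t, rfl⟩ := hx
      push_cast [hgclass, ZMod.natCast_self]
      ring
    have hrinj : ∀ j j' : ℕ, j < p → j' < p → r j = r j' → j = j' := by
      intro j j' hj hj' hrr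
      have h1 : (j : ZMod p) * (q : ZMod p) = (j' : ZMod p) * q := by
        simp only [hr] at hrr
        exact sub_right_injective hrr
      have h2 : (j : ZMod p) = (j' : ZMod p) := by
        have h3 := congrArg (· * ((u⁻¹ : (ZMod p)ˣ) : ZMod p)) h1
        simp only [← huq, mul_assoc, Units.mul_inv, mul_one] at h3
        exact h3
      have h4 := congrArg ZMod.val h2
      rwa [ZMod.val_natCast_of_lt hj, ZMod.val_natCast_of_lt hj'] at h4
    have hWdisj : ∀ j ∈ range p, ∀ j' ∈ range p, j ≠ j' → Disjoint (Wj j) (Wj j') := by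
      intro j hj j' hj' hne
      rw [Finset.disjoint_left]
      intro x hx hx'
      exact hne (hrinj j j' (mem_range.mp hj) (mem_range.mp hj')
        ((hclassW j x hx).symm.trans (hclassW j' x hx')))
    have hsumD : ∑ j ∈ range p, (Wj j).card ≤ D.card := by
      rw [← Finset.card_biUnion hWdisj]
      exact Finset.card_le_card (Finset.biUnion_subset.mpr fun j _ => hWD j)
    have hWcard : ∀ j, ((Wj j).card : ℤ) = ceQ p (e j + q) - ceQ p (e j) := by
      intro j
      rw [hW]
      rw [count_AP hp (g (r j)) ai (ai + q) hlohi]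
      have h1 : ((ai + q : ℕ) : ℤ) - (g (r j)) = e j + q := by simp only [he]; push_cast; ring
      have h2 : ((ai : ℕ) : ℤ) - (g (r j)) = e j := by simp only [he]
      rw [h1, h2]
    have hψcore : ∀ m : Fin p,
        r ((((ρ - ((a m : ZMod p))) * ((u⁻¹ : (ZMod p)ˣ) : ZMod p)).val)) = (a m : ZMod p) := by
      intro m
      simp only [hr]
      rw [ZMod.natCast_val, ZMod.cast_id]
      rw [← huq, mul_assoc, Units.inv_mul, mul_one]
      ring
    open Fin.NatCast in
    have hkcount : ((range p).filter (fun j => 0 ≤ e j)).card = (i : ℕ) + 1 := by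
      rw [show (i:ℕ) + 1 = (Finset.range ((i:ℕ)+1)).card from (Finset.card_range _).symm]
      apply Finset.card_bij' (fun j _ => ((E.symm (r j) : Fin p) : ℕ))
        (fun m _ => (((ρ - ((a ((m : Fin p)) : ZMod p))) * ((u⁻¹ : (ZMod p)ˣ) : ZMod p)).val))
      · intro j hj
        simp only [Finset.mem_filter] at hj
        obtain ⟨hjr, hje⟩ := hj
        have h1 : g (r j) ≤ ai := by
          simp only [he] at hje
          omega
        have h2 : E.symm (r j) ≤ i := ha.le_iff_le.mp h1
        rw [Finset.mem_range]
        omega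
      · intro m hm
        rw [Finset.mem_range] at hm
        have hmp : m < p := lt_of_lt_of_le hm i.2
        have hmF : (((m : Fin p)) : ℕ) = m := Fin.val_cast_of_lt hmp
        rw [Finset.mem_filter, Finset.mem_range]
        constructor
        · exact ZMod.val_lt _
        · have h3 : g (r ((((ρ - ((a ((m : Fin p)) : ZMod p))) * ((u⁻¹ : (ZMod p)ˣ) : ZMod p)).val))) = a ((m : Fin p)) := by
            rw [hψcore (m : Fin p)]
            exact hga _
          simp only [he, h3]
          have h4 : ((m : Fin p)) ≤ i := by
            rw [Fin.le_def, hmF]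
            omega
          have h5 : a ((m : Fin p)) ≤ ai := ha.le_iff_le.mpr h4
          omega
      · intro j hj
        simp only [Finset.mem_filter, Finset.mem_range] at hj
        have hEa : ((a (E.symm (r j)) : ZMod p)) = r j := E.apply_symm_apply (r j)
        rw [Fin.cast_val_eq_self (E.symm (r j)), hEa]
        have h6 : ρ - r j = (j : ZMod p) * (q : ZMod p) := by
          simp only [hr]
          ring
        rw [h6, ← huq, mul_assoc, Units.mul_inv, mul_one]
        exact ZMod.val_natCast_of_lt hj.1
      · intro m hm
        rw [Finset.mem_range] at hm
        have hmp : m < p := lt_of_lt_of_le hm i.2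
        rw [hψcore ((m : Fin p))]
        have : E.symm ((a ((m : Fin p)) : ZMod p)) = ((m : Fin p)) := E.symm_apply_apply _
        rw [this]
        exact Fin.val_cast_of_lt hmp
    have hchain := chain_ineq p q (by exact_mod_cast hp) (by positivity) e he0 hstep hcong p
    rw [hkcount] at hchain
    have hsum2 : ∑ j ∈ range p, (ceQ p (e j + q) - ceQ p (e j))
        = ((∑ j ∈ range p, (Wj j).card : ℕ) : ℤ) := by
      rw [Nat.cast_sum]
      exact (Finset.sum_congr rfl fun j _ => (hWcard j)).symm
    rw [hsum2] at hchain
    have hfin : clz p ((((i:ℕ) + 1 : ℕ) : ℤ) * q) ≤ (D.card : ℤ) := by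
      refine le_trans ?_ (le_trans hchain ?_)
      · push_cast
        exact le_refl _
      · exact_mod_cast hsumD
    have hcast := clz_natCast hp (((i:ℕ)+1) * q)
    have hfin2 : (((((i:ℕ)+1) * q + p - 1)/p : ℕ) : ℤ) ≤ (D.card : ℤ) := by
      rw [hcast]
      refine le_trans (le_of_eq ?_) hfin
      push_cast
      ring
    exact_mod_cast hfin2
  have hDcard : ∀ i : Fin p,
      gInt q Δ (a i) = q - ((Finset.Ico (a i) (a i + q)).filter (· ∈ Δ)).card := by
    intro i
    unfold gInt
    have h1 : Set.Ico (a i) (a i + q) \ Δ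
        = ↑((Finset.Ico (a i) (a i + q)).filter (fun x => ¬ x ∈ Δ)) := by
      ext x
      simp [Set.mem_diff, Finset.coe_filter, Set.mem_Ico]
    rw [h1, Set.ncard_coe_finset]
    have h2 := Finset.card_filter_add_card_filter_not
      (s := Finset.Ico (a i) (a i + q)) (p := (· ∈ Δ))
    rw [Nat.card_Ico] at h2
    omega
  have part1 : ∀ i : Fin p, gInt q Δ (a i) ≤ q - ⌈(((i : ℕ) + 1) * q : ℚ) / (p : ℚ)⌉₊ := by
    intro i
    set K := ((i:ℕ)+1) * q with hK
    set W := (K + p - 1)/p with hWdef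
    have hceil : ⌈(((i : ℕ) + 1) * q : ℚ) / (p : ℚ)⌉₊ ≤ W := by
      rw [Nat.ceil_le, div_le_iff₀ (by positivity)]
      have h4 : p * W + (K + p - 1) % p = K + p - 1 := Nat.div_add_mod _ p
      have h5 : (K + p - 1) % p < p := Nat.mod_lt _ hp
      have h6 : K ≤ p * W := by omega
      rw [hK] at h6
      have h7 : ((((i:ℕ)+1) * q : ℕ) : ℚ) ≤ ((p * W : ℕ) : ℚ) := Nat.cast_le.mpr h6
      push_cast at h7
      linarith
    have hgoal : gInt q Δ (a i) ≤ q - W := by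
      rw [hDcard i]
      exact Nat.sub_le_sub_left (key i) q
    exact le_trans hgoal (Nat.sub_le_sub_left hceil q)
  refine ⟨part1, ?_⟩
  rintro ⟨c1, c2⟩ ⟨i, hc1, hc2, hcle⟩
  simp only at hc1 hc2 hcle
  have hWi := part1 i
  set C := ⌈(((i : ℕ) + 1) * q : ℚ) / (p : ℚ)⌉₊ with hC
  have hle : c2 ≤ q - C := le_trans hcle hWi
  have hCq : C < q := by omega
  have hip : (i:ℕ) + 1 < p := by
    by_contra hcon
    push_neg at hcon
    have hip' : (i:ℕ) + 1 = p := le_antisymm i.2 hcon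
    have hCeqq : C = q := by
      have hcast : ((i:ℕ) : ℚ) + 1 = (p : ℚ) := by exact_mod_cast congrArg (Nat.cast (R := ℚ)) hip'
      rw [hC, hcast, mul_comm, mul_div_assoc, div_self (Nat.cast_ne_zero.mpr hp.ne'), mul_one,
        Nat.ceil_natCast]
    omega
  have hlow : ((i:ℕ)+1) * q < p * C := by
    have h1 : ((((i:ℕ)+1) * q : ℕ) : ℚ) / (p : ℚ) ≤ (C : ℚ) := by
      rw [hC]
      convert Nat.le_ceil (R := ℚ) _ using 2
      · rfl
      · rfl
      push_cast
      ring
    rw [div_le_iff₀ (by positivity)] at h1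
    have h2 : ((i:ℕ)+1) * q ≤ p * C := by
      have : ((((i:ℕ)+1) * q : ℕ) : ℚ) ≤ ((p * C : ℕ) : ℚ) := by
        push_cast
        push_cast at h1
        linarith
      exact_mod_cast this
    rcases lt_or_eq_of_le h2 with h | h
    · exact h
    · exfalso
      have hdvd : p ∣ ((i:ℕ)+1) * q := ⟨C, h⟩
      have hd2 := Nat.Coprime.dvd_of_dvd_mul_right hpq hdvd
      have := Nat.le_of_dvd (by omega) hd2
      omega
  simp only [Rplus, Set.mem_setOf_eq]
  refine ⟨by omega, by omega, ?_⟩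
  have hc2' : p * c2 ≤ p * (q - C) := Nat.mul_le_mul_left p hle
  have hsplit : p * q = p * C + p * (q - C) := by
    rw [← Nat.mul_add]
    congr 1
    omega
  calc q * c1 + p * c2 = ((i:ℕ)+1) * q + p * c2 := by rw [hc1, mul_comm]
    _ < p * C + p * (q - C) := add_lt_add_of_lt_of_le hlow hc2'
    _ = p * q := hsplit.symm

end
end

section
/- Let n ≥ 1 and let Δ be a 0-normalized Γ^{n,n+1}-semi-module with n-basis 0 = a_0 < a_1 < … < a_{n-1}. Then for every i with 0 ≤ i ≤ n−2, the number of n-generators of Δ in the closed interval [a_i + n, a_{i+1} + n] equals g(a_i) − g(a_{i+1}). -/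
section Aux

variable {n : ℕ} {Δ : Set ℕ}

lemma SM.add_n (hΔ : IsSemiModule n (n+1) Δ) {x : ℕ} (hx : x ∈ Δ) : x + n ∈ Δ :=
  hΔ.2 x hx n ⟨1, 0, by ring⟩

lemma SM.add_mul (hΔ : IsSemiModule n (n+1) Δ) {x : ℕ} (hx : x ∈ Δ) (k : ℕ) :
    x + k * n ∈ Δ := by
  induction k with
  | zero => simpa
  | succ k ih =>
    have h := SM.add_n hΔ ih
    have : x + k * n + n = x + (k+1) * n := by ring
    rwa [this] at h

/-- Every element of `Δ` is a basis element plus a multiple of `n`. -/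
lemma SM.exists_basis (hΔ : IsSemiModule n (n+1) Δ) (hn : 1 ≤ n) {x : ℕ} (hx : x ∈ Δ) :
    ∃ b ∈ pBasis n Δ, ∃ k, x = b + k * n := by
  induction x using Nat.strong_induction_on with
  | _ x ih =>
    by_cases h : x ∈ (· + n) '' Δ
    · obtain ⟨y, hy, hyx⟩ := h
      simp only at hyx
      obtain ⟨b, hb, k, hk⟩ := ih y (by omega) hy
      refine ⟨b, hb, k + 1, ?_⟩
      have : b + (k+1) * n = b + k * n + n := by ring
      rw [this, ← hk]; omega
    · exact ⟨x, ⟨hx, h⟩, 0, by simp⟩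

/-- If `b` is in `Δ`, `b ≤ x` and `b ≡ x (mod n)`, then `x ∈ Δ`. -/
lemma SM.mem_of_le (hΔ : IsSemiModule n (n+1) Δ) {b x : ℕ} (hb : b ∈ Δ)
    (hle : b ≤ x) (hmod : b % n = x % n) : x ∈ Δ := by
  obtain ⟨k, hk⟩ := (Nat.modEq_iff_dvd' hle).1 hmod
  rw [mul_comm] at hk
  have hx : x = b + k * n := by set m := k * n with hm; omega
  rw [hx]; exact SM.add_mul hΔ hb k

/-- A basis element that lies above a congruent element of `Δ` must equal it. -/
lemma SM.basis_eq_of_le (hΔ : IsSemiModule n (n+1) Δ) {b y : ℕ} (hb : b ∈ pBasis n Δ)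
    (hy : y ∈ Δ) (hle : y ≤ b) (hmod : y % n = b % n) : b = y := by
  obtain ⟨k, hk⟩ := (Nat.modEq_iff_dvd' hle).1 hmod
  rw [mul_comm] at hk
  match k, hk with
  | 0, hk => omega
  | k + 1, hk =>
    exfalso
    apply hb.2
    refine ⟨y + k * n, SM.add_mul hΔ hy k, ?_⟩
    simp only
    have : (k+1) * n = k * n + n := by ring
    rw [this] at hk
    set m := k * n with hm
    omega

/-- Basis elements are determined by their residue mod `n`. -/
lemma SM.basis_mod_inj (hΔ : IsSemiModule n (n+1) Δ) {b b' : ℕ} (hb : b ∈ pBasis n Δ)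
    (hb' : b' ∈ pBasis n Δ) (h : b % n = b' % n) : b = b' := by
  rcases le_total b b' with hle | hle
  · exact (SM.basis_eq_of_le hΔ hb' hb.1 hle h).symm
  · exact SM.basis_eq_of_le hΔ hb hb'.1 hle h.symm

/-- Every residue class mod `n` contains a basis element. -/
lemma SM.exists_basis_mod (hΔ : IsSemiModule n (n+1) Δ) (hn : 1 ≤ n) (x : ℕ) :
    ∃ b ∈ pBasis n Δ, b % n = x % n := by
  have hmem : 0 + (x % n) * (n+1) ∈ Δ := hΔ.2 0 hΔ.1 _ ⟨0, x % n, by ring⟩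
  obtain ⟨b, hb, k, hk⟩ := SM.exists_basis hΔ hn hmem
  refine ⟨b, hb, ?_⟩
  have h1 : 0 + (x % n) * (n+1) = (x % n) + (x % n) * n := by ring
  rw [h1] at hk
  have h2 := congrArg (· % n) hk
  simp only [Nat.add_mul_mod_self_right] at h2
  rw [← h2, Nat.mod_mod_of_dvd _ dvd_rfl]

private lemma mod_shift (a c n : ℕ) : (a + c) % n = (a + c % n) % n := by
  rw [Nat.add_mod_mod]

/-- Key lemma: for `a ∈ Δ`, `g(a)` equals the number of basis elements `≥ a + n`. -/
lemma SM.gInt_eq (hΔ : IsSemiModule n (n+1) Δ) (hn : 1 ≤ n) {a : ℕ} (ha : a ∈ Δ) :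
    gInt (n+1) Δ a = {b | b ∈ pBasis n Δ ∧ a + n ≤ b}.ncard := by
  have hpos : 0 < n := hn
  set B := {b | b ∈ pBasis n Δ ∧ a + n ≤ b} with hB
  set ψ : ℕ → ℕ := fun b => a + (b - a) % n with hψ
  -- for b ∈ B, b ≡ ψ b (mod n)
  have hmodψ : ∀ b ∈ B, b % n = ψ b % n := by
    intro b hb
    have hab : a + n ≤ b := hb.2
    have h1 : b = a + (b - a) := by omega
    conv_lhs => rw [h1]
    simp only [hψ]
    rw [mod_shift]
  have himg : Set.Ico a (a + (n+1)) \ Δ = ψ '' B := by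
    ext x
    constructor
    · rintro ⟨⟨hax, hxlt⟩, hxΔ⟩
      obtain ⟨b, hb, hmod⟩ := SM.exists_basis_mod hΔ hn x
      have hxan : x < a + n := by
        rcases (by omega : x < a + n ∨ x = a + n) with h | h
        · exact h
        · exact absurd (h ▸ SM.add_n hΔ ha) hxΔ
      have hbx : ¬ b ≤ x := fun h => hxΔ (SM.mem_of_le hΔ hb.1 h hmod)
      obtain ⟨k, hk⟩ := (Nat.modEq_iff_dvd' (by omega : x ≤ b)).1 hmod.symm
      have hk' : b - x = k * n := by rw [hk, mul_comm]
      have hk1 : 1 ≤ k := by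
        by_contra h
        have hk0 : k = 0 := by omega
        rw [hk0, zero_mul] at hk'
        omega
      have hnk : n ≤ k * n := Nat.le_mul_of_pos_left n hk1
      have hab : a + n ≤ b := by set m := k * n with hm; omega
      refine ⟨b, ⟨hb, hab⟩, ?_⟩
      -- ψ b = x
      have hba : b - a = (x - a) + k * n := by set m := k * n with hm; omega
      simp only [hψ]
      rw [hba, Nat.add_mul_mod_self_right, Nat.mod_eq_of_lt (by omega : x - a < n)]
      omega
    · rintro ⟨b, hb, rfl⟩
      have hab : a + n ≤ b := hb.2
      have hlt : (b - a) % n < n := Nat.mod_lt _ hpos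
      simp only [hψ]
      refine ⟨⟨by omega, by omega⟩, ?_⟩
      intro hx
      have heq : b = a + (b - a) % n :=
        SM.basis_eq_of_le hΔ hb.1 hx (by omega) (hmodψ b hb).symm
      omega
  have hinj : Set.InjOn ψ B := by
    intro b hb b' hb' h
    apply SM.basis_mod_inj hΔ hb.1 hb'.1
    rw [hmodψ b hb, hmodψ b' hb', h]
  rw [gInt, himg, Set.ncard_image_of_injOn hinj]

end Aux

/-- for the `n`-basis `0 = a_0 < … < a_{n-1}` of a `Γ^{n,n+1}`-semi-module,
the number of `n`-generators in `[a_i + n, a_{i+1} + n]` equals `g(a_i) - g(a_{i+1})`. -/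
theorem stmt_8 (n : ℕ) (hn : 1 ≤ n) (Δ : Set ℕ) (hΔ : IsSemiModule n (n + 1) Δ)
    (a : Fin n → ℕ) (ha : StrictMono a) (hrange : Set.range a = pBasis n Δ)
    (i : ℕ) (hi : i + 1 < n) :
    ({x | x ∈ pBasis n Δ ∧ a ⟨i, by omega⟩ + n ≤ x ∧ x ≤ a ⟨i + 1, hi⟩ + n}.ncard : ℤ) =
      (gInt (n + 1) Δ (a ⟨i, by omega⟩) : ℤ) - (gInt (n + 1) Δ (a ⟨i + 1, hi⟩) : ℤ) := by
  set b0 := a ⟨i, by omega⟩ with hb0def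
  set b1 := a ⟨i + 1, hi⟩ with hb1def
  have hb0 : b0 ∈ pBasis n Δ := by rw [← hrange]; exact ⟨_, rfl⟩
  have hb1 : b1 ∈ pBasis n Δ := by rw [← hrange]; exact ⟨_, rfl⟩
  have hlt : b0 < b1 := ha (by simp [Fin.lt_def])
  set A0 := {b | b ∈ pBasis n Δ ∧ b0 + n ≤ b} with hA0
  set A1 := {b | b ∈ pBasis n Δ ∧ b1 + n ≤ b} with hA1
  have hfin : (pBasis n Δ).Finite := hrange ▸ Set.finite_range a
  have hfinA0 : A0.Finite := hfin.subset fun x hx => hx.1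
  have hfinA1 : A1.Finite := hfin.subset fun x hx => hx.1
  have hsub : A1 ⊆ A0 := fun x hx => ⟨hx.1, by have := hx.2; omega⟩
  have hb1n : b1 + n ∉ pBasis n Δ := fun h => h.2 ⟨b1, hb1.1, rfl⟩
  have hTeq : {x | x ∈ pBasis n Δ ∧ b0 + n ≤ x ∧ x ≤ b1 + n} = A0 \ A1 := by
    ext x
    simp only [Set.mem_setOf_eq, Set.mem_diff, hA0, hA1]
    constructor
    · rintro ⟨hx, h1, h2⟩
      refine ⟨⟨hx, h1⟩, ?_⟩
      rintro ⟨-, h3⟩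
      have : x = b1 + n := by omega
      exact hb1n (this ▸ hx)
    · rintro ⟨⟨hx, h1⟩, h2⟩
      refine ⟨hx, h1, ?_⟩
      by_contra h
      exact h2 ⟨hx, by omega⟩
  have hle : A1.ncard ≤ A0.ncard := Set.ncard_le_ncard hsub hfinA0
  rw [SM.gInt_eq hΔ hn hb0.1, SM.gInt_eq hΔ hn hb1.1, hTeq,
    Set.ncard_diff hsub hfinA1, ← hA0, ← hA1]
  omega
end

section
/- Let n ≥ 1, let Δ be a 0-normalized Γ^{n,n+1}-semi-module, and let k ≥ 0 be an integer. If the interval [kn, (k+1)n] contains an n-generator of Δ and s_k denotes the minimal n-generator of Δ in this interval, then the whole interval of integers [kn, s_k] is contained in Δ. -/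
/-- if `s_k` is the minimal `n`-generator of `Δ` in `[kn, (k+1)n]`, then
`[kn, s_k] ⊆ Δ`. -/
theorem stmt_10 (n : ℕ) (hn : 1 ≤ n) (Δ : Set ℕ) (hΔ : IsSemiModule n (n + 1) Δ)
    (k : ℕ) (s : ℕ) (hs : s ∈ pBasis n Δ) (hs1 : k * n ≤ s) (hs2 : s ≤ (k + 1) * n)
    (hmin : ∀ x ∈ pBasis n Δ, k * n ≤ x → x ≤ (k + 1) * n → s ≤ x) :
    Set.Icc (k * n) s ⊆ Δ := by
  obtain ⟨h0, hcl⟩ := hΔ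
  have hadd1 : ∀ x ∈ Δ, x + (n + 1) ∈ Δ := fun x hx => hcl x hx (n + 1) ⟨0, 1, by ring⟩
  have haddcn : ∀ x ∈ Δ, ∀ c : ℕ, x + c * n ∈ Δ := fun x hx c => hcl x hx (c * n) ⟨c, 0, by ring⟩
  have hmem : ∀ a b : ℕ, a * n + b * (n + 1) ∈ Δ := by
    intro a b
    have := hcl 0 h0 (a * n + b * (n + 1)) ⟨a, b, rfl⟩
    simpa using this
  -- every element of Δ is a generator plus a multiple of n
  have hdec : ∀ y, y ∈ Δ → ∃ g c, g ∈ pBasis n Δ ∧ y = g + c * n := by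
    intro y
    induction y using Nat.strong_induction_on with
    | _ y ih =>
      intro hy
      by_cases hb : y ∈ pBasis n Δ
      · exact ⟨y, 0, hb, by ring⟩
      · have himg : y ∈ (· + n) '' Δ := by
          by_contra h
          exact hb ⟨hy, h⟩
        obtain ⟨z, hz, hzy⟩ := himg
        have hzy' : z + n = y := hzy
        obtain ⟨g, c, hg, hgc⟩ := ih z (by omega) hz
        exact ⟨g, c + 1, hg, by rw [← hzy', hgc]; ring⟩
  have hK1 : (k + 1) * n = k * n + n := by ring
  rw [hK1] at hs2
  set K := k * n with hK
  have hKn : (k + 1) * n = K + n := by rw [hK]; ring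
  intro x hx
  obtain ⟨hx1, hx2⟩ := hx
  set i := x - K with hi
  have hxi : x = K + i := by omega
  by_cases hik : i ≤ k
  · obtain ⟨d, hd⟩ := Nat.le.dest hik
    have hx' : x = d * n + i * (n + 1) := by rw [hxi, hK, ← hd]; ring
    rw [hx']
    exact hmem d i
  · by_contra hxΔ
    have chain : ∀ m, m ≤ i - k → K + (i - m) ∉ Δ := by
      intro m
      induction m with
      | zero =>
        intro _ h
        apply hxΔ
        have hx' : x = K + (i - 0) := by omega
        rw [hx']; exact h
      | succ m ih =>
        intro hm hmem'
        have hnot : K + (i - m) ∉ Δ := ih (by omega)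
        obtain ⟨g, c, hg, hgc⟩ := hdec _ hmem'
        cases c with
        | zero =>
          have hgeq : g = K + (i - (m + 1)) := by omega
          have hgs : s ≤ g := hmin g hg (by omega) (by rw [hKn]; omega)
          omega
        | succ c =>
          apply hnot
          have h1 : g + (n + 1) + c * n ∈ Δ := haddcn _ (hadd1 g hg.1) c
          have h2 : (c + 1) * n = c * n + n := by ring
          rw [h2] at hgc
          obtain ⟨C, hC⟩ : ∃ C, c * n = C := ⟨_, rfl⟩
          rw [hC] at hgc h1
          have heq : g + (n + 1) + C = K + (i - m) := by omega
          rwa [heq] at h1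
    have hlast := chain (i - k) le_rfl
    have hkk : K + k ∈ Δ := by
      have h3 : (0 : ℕ) * n + k * (n + 1) = K + k := by rw [hK]; ring
      have := hmem 0 k
      rwa [h3] at this
    have h4 : i - (i - k) = k := by omega
    rw [h4] at hlast
    exact hlast hkk
end

section
/- Let n ≥ 1. The map sending a 0-normalized Γ^{n,n+1}-semi-module Δ with n-basis 0 = a_0 < a_1 < … < a_{n-1} to the sequence (g(a_0), g(a_1), …, g(a_{n-1})) is a bijection from the set of 0-normalized Γ^{n,n+1}-semi-modules onto the set of weakly decreasing sequences λ_1 ≥ λ_2 ≥ … ≥ λ_n ≥ 0 of nonnegative integers with λ_k ≤ n − k for all 1 ≤ k ≤ n (i.e. onto the set of Young diagrams contained in the staircase (n−1, n−2, …, 1, 0), which is R_+^{n,n+1}). In particular the sequence (g(a_0), …, g(a_{n-1})) is always weakly decreasing. -/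
open Finset

/-- The sequence `(g(a_0), …, g(a_{n-1}))`, where `0 = a_0 < a_1 < … < a_{n-1}` is the
`n`-basis of `Δ` (enumerated in increasing order by `Nat.nth`). -/
noncomputable def gSeq (n : ℕ) (Δ : Set ℕ) (k : Fin n) : ℕ :=
  gInt (n + 1) Δ (Nat.nth (· ∈ pBasis n Δ) (k : ℕ))

namespace SM

/-- Lexicographic comparison of (value, position) keys. -/
def klt (a i b j : ℕ) : Prop := a < b ∨ (a = b ∧ i < j)

instance (a i b j : ℕ) : Decidable (klt a i b j) := by unfold klt; infer_instance

lemma klt_irrefl (a i : ℕ) : ¬ klt a i a i := by simp [klt]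

lemma klt_trans {a i b j c k : ℕ} (h1 : klt a i b j) (h2 : klt b j c k) : klt a i c k := by
  rcases h1 with h1 | ⟨h1, h1'⟩ <;> rcases h2 with h2 | ⟨h2, h2'⟩ <;>
    simp [klt] <;> omega

lemma klt_trichotomy (a i b j : ℕ) : klt a i b j ∨ (a = b ∧ i = j) ∨ klt b j a i := by
  unfold klt; omega

lemma klt_asymm {a i b j : ℕ} (h : klt a i b j) : ¬ klt b j a i := by
  unfold klt at *; omega

lemma klt_succ {a i b j : ℕ} (h : klt a i b j) : klt (a+1) i (b+1) j := by
  unfold klt at *; omega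

/-- Rank of position `s` in the word `c` of length `n`. -/
def rnk (n : ℕ) (c : ℕ → ℕ) (s : ℕ) : ℕ :=
  ((range n).filter (fun r => klt (c r) r (c s) s)).card

/-- The number of positions whose key exceeds `(c s + 1, s)`:
the "g-value" of the letter at `s`. -/
def vl (n : ℕ) (c : ℕ → ℕ) (s : ℕ) : ℕ :=
  ((range n).filter (fun r => klt (c s + 1) s (c r) r)).card

/-- The zeta map: value of the rank-`k` letter. -/
def Z (n : ℕ) (c : ℕ → ℕ) (k : ℕ) : ℕ :=
  ∑ s ∈ range n, if rnk n c s = k then vl n c s else 0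

/-- Valid area word of length `n` (canonical: zero outside `[0,n)`). -/
def Word (n : ℕ) (c : ℕ → ℕ) : Prop :=
  (∀ i, i + 1 < n → c (i+1) ≤ c i + 1) ∧ (∀ i, n ≤ i ∨ i = 0 → c i = 0)

/-- Staircase partition data (as a function on ℕ, zero outside `[0,n)`). -/


lemma rnk_lt {n c s} (hs : s < n) : rnk n c s < n := by
  have : ((range n).filter (fun r => klt (c r) r (c s) s)).card < (range n).card := by
    apply card_lt_card
    constructor
    · exact filter_subset _ _
    · intro hsub
      have := hsub (mem_range.mpr hs)
      simp only [mem_filter] at this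
      exact klt_irrefl _ _ this.2
  simpa [rnk] using this

lemma rnk_lt_rnk {n c r s} (hr : r < n) (h : klt (c r) r (c s) s) :
    rnk n c r < rnk n c s := by
  apply card_lt_card
  constructor
  · intro x hx
    simp only [mem_filter, mem_range] at hx ⊢
    exact ⟨hx.1, klt_trans hx.2 h⟩
  · intro hsub
    have := hsub (by simp only [mem_filter, mem_range]; exact ⟨hr, h⟩)
    simp only [mem_filter] at this
    exact klt_irrefl _ _ this.2

lemma rnk_injOn {n c r s} (hr : r < n) (hs : s < n) (h : rnk n c r = rnk n c s) : r = s := by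
  rcases klt_trichotomy (c r) r (c s) s with h1 | ⟨_, h1⟩ | h1
  · exact absurd h (Nat.ne_of_lt (rnk_lt_rnk hr h1))
  · exact h1
  · exact absurd h.symm (Nat.ne_of_lt (rnk_lt_rnk hs h1))

lemma rnk_surj {n c k} (hk : k < n) : ∃ s, s < n ∧ rnk n c s = k := by
  have := Finset.surj_on_of_inj_on_of_card_le (s := range n) (t := range n)
    (fun s _ => rnk n c s)
    (fun a ha => mem_range.mpr (rnk_lt (mem_range.mp ha)))
    (fun a b ha hb hab => rnk_injOn (mem_range.mp ha) (mem_range.mp hb) hab)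
    le_rfl k (mem_range.mpr hk)
  obtain ⟨s, hs, hsk⟩ := this
  exact ⟨s, mem_range.mp hs, hsk.symm⟩

lemma Z_rnk {n c s} (hs : s < n) : Z n c (rnk n c s) = vl n c s := by
  unfold Z
  rw [Finset.sum_eq_single s]
  · simp
  · intro t ht hts
    simp only [mem_range] at ht
    rw [if_neg]
    intro h
    exact hts (rnk_injOn ht hs h)
  · intro h
    exact absurd (mem_range.mpr hs) h

lemma Z_zero_of_ge {n c k} (hk : n ≤ k) : Z n c k = 0 := by
  unfold Z
  apply Finset.sum_eq_zero
  intro s hs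
  rw [if_neg]
  intro h
  exact absurd (h ▸ rnk_lt (mem_range.mp hs)) (by omega)

/-- A set downward closed under the key order is an initial segment of ranks. -/
lemma mem_downclosed_iff_rnk_lt {n : ℕ} {c : ℕ → ℕ} (P : ℕ → Prop) [DecidablePred P]
    (hdc : ∀ r s, r < n → s < n → klt (c r) r (c s) s → P s → P r)
    {s : ℕ} (hs : s < n) :
    P s ↔ rnk n c s < ((range n).filter P).card := by
  constructor
  · intro hP
    have hsub : insert s ((range n).filter (fun r => klt (c r) r (c s) s)) ⊆
        (range n).filter P := by
      intro x hx
      rcases Finset.mem_insert.mp hx with rfl | hx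
      · simp only [mem_filter, mem_range]; exact ⟨hs, hP⟩
      · simp only [mem_filter, mem_range] at hx ⊢
        exact ⟨hx.1, hdc _ _ hx.1 hs hx.2 hP⟩
    have := Finset.card_le_card hsub
    rwa [Finset.card_insert_of_notMem (by simp [klt_irrefl])] at this
  · intro hcard
    by_contra hP
    have hsub : (range n).filter P ⊆ (range n).filter (fun r => klt (c r) r (c s) s) := by
      intro x hx
      simp only [mem_filter, mem_range] at hx ⊢
      refine ⟨hx.1, ?_⟩
      rcases klt_trichotomy (c x) x (c s) s with h1 | ⟨_, h1⟩ | h1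
      · exact h1
      · exact absurd hx.2 (h1 ▸ hP)
      · exact absurd (hdc _ _ hs hx.1 h1 hx.2) hP
    exact absurd (Finset.card_le_card hsub) (by unfold rnk at hcard; omega)


/-- Delete the letter at position `p`. -/
def del (c : ℕ → ℕ) (p : ℕ) : ℕ → ℕ := fun i => if i < p then c i else c (i+1)

/-- Embedding of positions of the deleted word into the original. -/
def emb (p i : ℕ) : ℕ := if i < p then i else i + 1

/-- `p` is the position of the last occurrence of the maximal letter. -/
def MaxLast (n : ℕ) (c : ℕ → ℕ) (p : ℕ) : Prop :=
  p < n ∧ 1 ≤ c p ∧ ∀ r, r < n → r ≠ p → klt (c r) r (c p) p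

/-- The number of letters whose key is below `(c p, p)` even after bumping. -/
def Jv (n : ℕ) (c : ℕ → ℕ) (p : ℕ) : ℕ :=
  ((range n).filter (fun r => klt (c r + 1) r (c p) p)).card

lemma del_apply_emb (c : ℕ → ℕ) (p s : ℕ) : del c p s = c (emb p s) := by
  unfold del emb; split <;> rfl

lemma emb_lt_emb_iff {p i j : ℕ} : emb p i < emb p j ↔ i < j := by
  unfold emb; split <;> split <;> omega

lemma emb_ne (p i : ℕ) (h : True) : emb p i ≠ p := by unfold emb; split <;> omega

lemma card_filter_emb (n p : ℕ) (hp : p < n) (Q : ℕ → Prop) [DecidablePred Q] :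
    ((range (n-1)).filter (fun r => Q (emb p r))).card = (((range n).filter Q).erase p).card := by
  apply Finset.card_nbij (i := emb p)
  · intro a ha
    simp only [mem_coe, mem_filter, mem_range] at ha
    simp only [mem_coe, Finset.mem_erase, mem_filter, mem_range]
    refine ⟨emb_ne p a trivial, ?_, ha.2⟩
    unfold emb; split <;> omega
  · intro a ha b hb hab
    simp only [mem_coe] at *
    have : emb p a < emb p b ∨ emb p a = emb p b ∧ True := Or.inr ⟨hab, trivial⟩
    rcases Nat.lt_trichotomy a b with h | h | h
    · exact absurd hab (Nat.ne_of_lt (emb_lt_emb_iff.mpr h))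
    · exact h
    · exact absurd hab.symm (Nat.ne_of_lt (emb_lt_emb_iff.mpr h))
  · intro x hx
    simp only [Finset.coe_erase, Set.mem_diff, Set.mem_singleton_iff, mem_coe, mem_filter,
      mem_range] at hx
    obtain ⟨⟨hxn, hQ⟩, hxp⟩ := hx
    by_cases h : x < p
    · refine ⟨x, ?_, ?_⟩
      · simp only [coe_filter, Set.mem_setOf_eq, mem_range]
        constructor
        · omega
        · unfold emb; rw [if_pos h]; exact hQ
      · unfold emb; rw [if_pos h]
    · have hxgt : p < x := by omega
      refine ⟨x - 1, ?_, ?_⟩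
      · simp only [coe_filter, Set.mem_setOf_eq, mem_range]
        have hemb : emb p (x-1) = x := by unfold emb; split <;> omega
        constructor
        · omega
        · rw [hemb]; exact hQ
      · unfold emb; split <;> omega

lemma card_filter_del {n p : ℕ} (hp : p < n) (Q : ℕ → Prop) [DecidablePred Q] :
    ((range (n-1)).filter (fun r => Q (emb p r))).card
      = ((range n).filter Q).card - (if Q p then 1 else 0) := by
  rw [card_filter_emb n p hp Q]
  by_cases h : Q p
  · rw [Finset.card_erase_of_mem (by simp [mem_filter, mem_range, hp, h]), if_pos h]
  · rw [Finset.erase_eq_of_notMem (by simp [mem_filter, h]), if_neg h]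
    omega

section Peel

variable {n : ℕ} {c : ℕ → ℕ} {p : ℕ}

lemma maxlast_pos (hw : Word n c) (hm : MaxLast n c p) : 1 ≤ p := by
  rcases hm with ⟨hpn, hpv, _⟩
  by_contra h
  have : p = 0 := by omega
  have := hw.2 p (Or.inr this)
  omega

lemma peel_word (hw : Word n c) (hm : MaxLast n c p) : Word (n-1) (del c p) := by
  obtain ⟨hpn, hpv, hmax⟩ := hm
  have hp1 : 1 ≤ p := maxlast_pos hw ⟨hpn, hpv, hmax⟩
  constructor
  · intro i hi
    unfold del
    rcases Nat.lt_trichotomy (i+1) p with h | h | h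
    · rw [if_pos h, if_pos (by omega)]
      exact hw.1 i (by omega)
    · -- i + 1 = p : need c (p+1) ≤ c (p-1) + 1
      rw [if_neg (by omega), if_pos (by omega)]
      have h1 : c (i + 1 + 1) < c p := by
        have hx := hmax (i+1+1) (by omega) (by omega)
        unfold klt at hx; omega
      have h2 : c p ≤ c i + 1 := by
        rw [← h]
        exact hw.1 i (by omega)
      omega
    · rw [if_neg (by omega), if_neg (by omega)]
      exact hw.1 (i+1) (by omega)
  · intro i hi
    unfold del
    rcases hi with hi | hi
    · rw [if_neg (by omega)]
      exact hw.2 _ (Or.inl (by omega))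
    · subst hi
      rw [if_pos (by omega)]
      exact hw.2 0 (Or.inr rfl)

lemma not_klt_max (hm : MaxLast n c p) {r : ℕ} (hr : r < n) : ¬ klt (c p) p (c r) r := by
  obtain ⟨hpn, hpv, hmax⟩ := hm
  by_cases h : r = p
  · subst h; exact klt_irrefl _ _
  · exact klt_asymm (hmax r hr h)

lemma rnk_del (hm : MaxLast n c p) {s : ℕ} (hs : s < n - 1) :
    rnk (n-1) (del c p) s = rnk n c (emb p s) := by
  unfold rnk
  have hrw : ∀ r, (klt (del c p r) r (del c p s) s ↔ klt (c (emb p r)) (emb p r) (c (emb p s)) (emb p s)) := by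
    intro r
    rw [del_apply_emb, del_apply_emb]
    unfold klt
    rw [emb_lt_emb_iff]
  rw [filter_congr (fun r _ => by rw [hrw r])]
  rw [card_filter_del hm.1 (fun x => klt (c x) x (c (emb p s)) (emb p s))]
  rw [if_neg (not_klt_max hm (by unfold emb; split <;> omega))]
  rfl

lemma vl_del (hm : MaxLast n c p) {s : ℕ} (hs : s < n - 1) :
    vl n c (emb p s) = vl (n-1) (del c p) s
      + (if klt (c (emb p s) + 1) (emb p s) (c p) p then 1 else 0) := by
  unfold vl
  have hrw : ∀ r, (klt (del c p s + 1) s (del c p r) r ↔ klt (c (emb p s) + 1) (emb p s) (c (emb p r)) (emb p r)) := by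
    intro r
    rw [del_apply_emb, del_apply_emb]
    unfold klt
    rw [emb_lt_emb_iff]
  have hmain : ((range (n-1)).filter (fun r => klt (del c p s + 1) s (del c p r) r)).card
      = ((range n).filter (fun x => klt (c (emb p s) + 1) (emb p s) (c x) x)).card
        - (if klt (c (emb p s) + 1) (emb p s) (c p) p then 1 else 0) := by
    rw [filter_congr (fun r _ => by rw [hrw r])]
    exact card_filter_del hm.1 (fun x => klt (c (emb p s) + 1) (emb p s) (c x) x)
  rw [hmain]
  have hle : (if klt (c (emb p s) + 1) (emb p s) (c p) p then 1 else 0) ≤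
      ((range n).filter (fun x => klt (c (emb p s) + 1) (emb p s) (c x) x)).card := by
    split
    · rename_i h
      have : p ∈ (range n).filter (fun x => klt (c (emb p s) + 1) (emb p s) (c x) x) := by
        simp only [mem_filter, mem_range]
        exact ⟨hm.1, h⟩
      exact Finset.card_pos.mpr ⟨p, this⟩
    · omega
  omega

lemma Jv_le (hm : MaxLast n c p) : Jv n c p ≤ n - 1 := by
  have hsub : (range n).filter (fun r => klt (c r + 1) r (c p) p) ⊆ (range n).erase p := by
    intro x hx
    simp only [mem_filter, mem_range] at hx
    simp only [Finset.mem_erase, mem_range]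
    refine ⟨?_, hx.1⟩
    intro h
    subst h
    unfold klt at hx
    omega
  have := Finset.card_le_card hsub
  rw [Finset.card_erase_of_mem (mem_range.mpr hm.1)] at this
  simpa [Jv] using this

lemma rnk_max (hm : MaxLast n c p) : rnk n c p = n - 1 := by
  unfold rnk
  have : (range n).filter (fun r => klt (c r) r (c p) p) = (range n).erase p := by
    apply Finset.ext
    intro x
    simp only [mem_filter, Finset.mem_erase, mem_range]
    constructor
    · rintro ⟨h1, h2⟩
      exact ⟨by rintro rfl; exact klt_irrefl _ _ h2, h1⟩
    · rintro ⟨h1, h2⟩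
      exact ⟨h2, hm.2.2 x h2 h1⟩
  rw [this, Finset.card_erase_of_mem (mem_range.mpr hm.1)]
  simp

lemma vl_max (hm : MaxLast n c p) : vl n c p = 0 := by
  unfold vl
  rw [Finset.card_eq_zero, Finset.filter_eq_empty_iff]
  intro r hr
  simp only [mem_range] at hr
  intro h
  have : klt (c p) p (c r) r := by
    unfold klt at h ⊢
    omega
  exact not_klt_max hm hr this

/-- Membership in `Jv`'s defining set is a rank-initial-segment condition. -/
lemma jset_iff (hm : MaxLast n c p) {s : ℕ} (hs : s < n) :
    klt (c s + 1) s (c p) p ↔ rnk n c s < Jv n c p := by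
  exact mem_downclosed_iff_rnk_lt (fun r => klt (c r + 1) r (c p) p)
    (fun r s _ _ h1 h2 => klt_trans (klt_succ h1) h2) hs

/-- `vl` vanishes above the cut. -/
lemma vl_zero_of_not_jset (hm : MaxLast n c p) {s : ℕ} (hs : s < n)
    (h : ¬ klt (c s + 1) s (c p) p) : vl n c s = 0 := by
  unfold vl
  rw [Finset.card_eq_zero, Finset.filter_eq_empty_iff]
  intro r hr
  simp only [mem_range] at hr
  intro hk
  by_cases hrp : r = p
  · exact h (hrp ▸ hk)
  · exact h (klt_trans hk (hm.2.2 r hr hrp))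

/-- The peel identity. -/
lemma peel_Z (hw : Word n c) (hm : MaxLast n c p) (k : ℕ) :
    Z n c k = Z (n-1) (del c p) k + (if k < Jv n c p then 1 else 0) := by
  by_cases hk : k < n
  case neg =>
    rw [Z_zero_of_ge (by omega), Z_zero_of_ge (by omega), if_neg (by have := Jv_le hm; omega)]
  obtain ⟨s, hs, hsk⟩ := rnk_surj (c := c) hk
  subst hsk
  rw [Z_rnk hs]
  by_cases hsp : s = p
  · subst hsp
    rw [vl_max hm, rnk_max hm]
    rw [Z_zero_of_ge (by omega), if_neg (by have := Jv_le hm; omega)]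
  · -- s = emb p s₀
    have hs0 : ∃ s₀, s₀ < n - 1 ∧ emb p s₀ = s := by
      by_cases h : s < p
      · exact ⟨s, by have := hm.1; omega, by unfold emb; rw [if_pos h]⟩
      · refine ⟨s - 1, by omega, ?_⟩
        unfold emb
        have : ¬ (s - 1 < p) := by omega
        rw [if_neg this]
        omega
    obtain ⟨s₀, hs₀, rfl⟩ := hs0
    rw [vl_del hm hs₀, ← rnk_del hm hs₀, Z_rnk (by omega)]
    congr 1
    rw [rnk_del hm hs₀]
    by_cases h : klt (c (emb p s₀) + 1) (emb p s₀) (c p) p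
    · rw [if_pos h, if_pos ((jset_iff hm hs).mp h)]
    · rw [if_neg h, if_neg (fun hc => h ((jset_iff hm hs).mpr hc))]

/-- Above the cut, the peeled word's Z vanishes too. -/
lemma peel_Z_zero (hw : Word n c) (hm : MaxLast n c p) {k : ℕ} (hk : Jv n c p ≤ k) :
    Z (n-1) (del c p) k = 0 := by
  by_cases hkn : k < n - 1
  case neg => exact Z_zero_of_ge (by omega)
  obtain ⟨s₀, hs₀, rfl⟩ := rnk_surj (c := del c p) hkn
  rw [Z_rnk hs₀]
  have hrk := rnk_del hm hs₀
  have hsn : emb p s₀ < n := by unfold emb; split <;> omega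
  have hnot : ¬ klt (c (emb p s₀) + 1) (emb p s₀) (c p) p := by
    intro h
    have := (jset_iff hm hsn).mp h
    omega
  have h0 := vl_zero_of_not_jset hm hsn hnot
  have := vl_del hm hs₀
  omega

/-- Z is nonzero exactly below the cut. -/
lemma Z_ne_zero_iff (hw : Word n c) (hm : MaxLast n c p) (k : ℕ) :
    Z n c k ≠ 0 ↔ k < Jv n c p := by
  rw [peel_Z hw hm k]
  constructor
  · intro h
    by_contra hk
    rw [if_neg hk] at h
    rw [peel_Z_zero hw hm (by omega)] at h
    omega
  · intro h
    rw [if_pos h]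
    omega







end Peel

/-- Insert letter `V` at position `p`. -/
def ins (e : ℕ → ℕ) (p V : ℕ) : ℕ → ℕ :=
  fun i => if i < p then e i else if i = p then V else e (i-1)

lemma del_ins (e : ℕ → ℕ) (p V : ℕ) : del (ins e p V) p = e := by
  funext i
  unfold del ins
  rcases Nat.lt_trichotomy i p with h | h | h
  · rw [if_pos h, if_pos h]
  · subst h
    rw [if_neg (by omega), if_neg (by omega), if_neg (by omega)]
    simp
  · rw [if_neg (by omega), if_neg (by omega), if_neg (by omega)]
    simp

lemma ins_del {n : ℕ} {c : ℕ → ℕ} {p : ℕ} (hp : p < n) :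
    ins (del c p) p (c p) = c := by
  funext i
  unfold ins del
  rcases Nat.lt_trichotomy i p with h | h | h
  · rw [if_pos h, if_pos h]
  · subst h; rw [if_neg (by omega), if_pos rfl]
  · rw [if_neg (by omega), if_neg (by omega), if_neg (by omega)]
    congr 1
    omega

lemma klt_of_rnk_lt {n : ℕ} {c : ℕ → ℕ} {r s : ℕ} (hr : r < n) (hs : s < n)
    (h : rnk n c r < rnk n c s) : klt (c r) r (c s) s := by
  rcases klt_trichotomy (c r) r (c s) s with h1 | ⟨h1, h1'⟩ | h1
  · exact h1
  · subst h1'; omega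
  · exact absurd h (by have := rnk_lt_rnk (c := c) hs h1; omega)

lemma exists_maxlast {n : ℕ} {c : ℕ → ℕ} (hne : ∃ r, r < n ∧ 1 ≤ c r) :
    ∃ p, MaxLast n c p := by
  obtain ⟨r0, hr0, hr0v⟩ := hne
  obtain ⟨p, hp, hrnk⟩ := rnk_surj (n := n) (c := c) (k := n - 1) (by omega)
  refine ⟨p, hp, ?_, ?_⟩
  · by_cases h : r0 = p
    · exact h ▸ hr0v
    · have : klt (c r0) r0 (c p) p := by
        apply klt_of_rnk_lt hr0 hp
        have h1 := rnk_lt (c := c) hr0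
        have h2 : rnk n c r0 ≠ n - 1 :=
          fun hc => h (rnk_injOn (c := c) hr0 hp (hc.trans hrnk.symm))
        omega
      unfold klt at this; omega
  · intro r hr hrp
    apply klt_of_rnk_lt hr hp
    have h1 := rnk_lt (c := c) hr
    have h2 : rnk n c r ≠ n - 1 :=
      fun hc => hrp (rnk_injOn (c := c) hr hp (hc.trans hrnk.symm))
    omega

lemma le_max_of_maxlast {m : ℕ} {e : ℕ → ℕ} {pe : ℕ} (hm : MaxLast m e pe)
    {q : ℕ} (hq : q < m) : e q ≤ e pe := by
  by_cases h : q = pe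
  · subst h; exact le_rfl
  · have := hm.2.2 q hq h
    unfold klt at this; omega

lemma Z_zero_word {m : ℕ} {e : ℕ → ℕ} (h0 : ∀ q, q < m → e q = 0) (k : ℕ) :
    Z m e k = 0 := by
  unfold Z
  apply Finset.sum_eq_zero
  intro s hs
  rw [mem_range] at hs
  have : vl m e s = 0 := by
    unfold vl
    rw [Finset.card_eq_zero, Finset.filter_eq_empty_iff]
    intro r hr
    rw [mem_range] at hr
    rw [h0 r hr, h0 s hs]
    unfold klt; omega
  rw [this]
  simp

lemma card_filter_or_disj {s : Finset ℕ} {p q : ℕ → Prop} [DecidablePred p] [DecidablePred q]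
    (h : ∀ x ∈ s, p x → ¬ q x) :
    (s.filter (fun x => p x ∨ q x)).card = (s.filter p).card + (s.filter q).card := by
  rw [filter_or]
  exact Finset.card_union_of_disjoint (Finset.disjoint_filter.mpr h)

/-- Real proof of Jv_split. -/
lemma Jv_split {n : ℕ} {c : ℕ → ℕ} {p : ℕ} (hm : MaxLast n c p) :
    Jv n c p = ((range (n-1)).filter (fun q => del c p q + 2 ≤ c p)).card
             + ((range (n-1)).filter (fun q => del c p q + 1 = c p ∧ q < p)).card := by
  have h1 := card_filter_del hm.1 (fun r => klt (c r + 1) r (c p) p)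
  rw [if_neg (by unfold klt; omega), Nat.sub_zero] at h1
  have h2 : ∀ q, (klt (c (emb p q) + 1) (emb p q) (c p) p
      ↔ (del c p q + 2 ≤ c p ∨ (del c p q + 1 = c p ∧ q < p))) := by
    intro q
    rw [← del_apply_emb c p q]
    unfold klt emb
    split <;> (constructor <;> omega)
  rw [filter_congr (fun q _ => by rw [h2 q])] at h1
  unfold Jv
  rw [← h1]
  exact card_filter_or_disj (fun x _ hx => by omega)

/-- Direct splitting of `Jv` at a maxlast position. -/
lemma Jv_split_self {m : ℕ} {e : ℕ → ℕ} {pe : ℕ} (hm : MaxLast m e pe) :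
    Jv m e pe = ((range m).filter (fun q => e q + 2 ≤ e pe)).card
              + ((range m).filter (fun q => e q + 1 = e pe ∧ q < pe)).card := by
  unfold Jv
  rw [filter_congr (q := fun r => e r + 2 ≤ e pe ∨ (e r + 1 = e pe ∧ r < pe))
    (fun r _ => by unfold klt; constructor <;> omega)]
  exact card_filter_or_disj (fun x _ hx => by omega)

/-- Statistics used to reconstruct the inserted letter. -/
def MX (m : ℕ) (e : ℕ → ℕ) : ℕ := (range m).sup e
def NMx (m : ℕ) (e : ℕ → ℕ) : ℕ := ((range m).filter (fun q => e q = MX m e)).card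
def Av (m : ℕ) (e : ℕ → ℕ) (V : ℕ) : ℕ := ((range m).filter (fun q => e q + 2 ≤ V)).card
def cnt (m : ℕ) (e : ℕ → ℕ) (V q : ℕ) : ℕ :=
  ((range m).filter (fun u => e u + 1 = V ∧ u ≤ q)).card
def Vsel (m : ℕ) (e : ℕ → ℕ) (J : ℕ) : ℕ :=
  if J + NMx m e ≤ m ∧ 1 ≤ MX m e then MX m e else MX m e + 1
def Tset (m : ℕ) (e : ℕ → ℕ) (J : ℕ) : Finset ℕ :=
  (range m).filter (fun q => e q = Vsel m e J ∨
    (e q + 1 = Vsel m e J ∧ cnt m e (Vsel m e J) q ≤ J - Av m e (Vsel m e J)))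
def Psel (m : ℕ) (e : ℕ → ℕ) (J : ℕ) : ℕ := (Tset m e J).sup id + 1

lemma mem_Tset_iff {m : ℕ} {e : ℕ → ℕ} {J q : ℕ} :
    q ∈ Tset m e J ↔ q < m ∧ (e q = Vsel m e J ∨
      (e q + 1 = Vsel m e J ∧ cnt m e (Vsel m e J) q ≤ J - Av m e (Vsel m e J))) := by
  unfold Tset
  simp only [mem_filter, mem_range]

lemma le_MX {m : ℕ} {e : ℕ → ℕ} {q : ℕ} (hq : q < m) : e q ≤ MX m e :=
  Finset.le_sup (f := e) (mem_range.mpr hq)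

lemma MX_comp {m : ℕ} {e : ℕ → ℕ} :
    ((range m).filter (fun q => e q < MX m e)).card + NMx m e = m := by
  have hx : ((range m).filter (fun q => ¬ (e q < MX m e))).card = NMx m e := by
    unfold NMx
    congr 1
    apply filter_congr
    intro x hx
    rw [mem_range] at hx
    have := le_MX (m := m) (e := e) hx
    constructor <;> intro <;> omega
  have hy := Finset.card_filter_add_card_filter_not (s := range m)
    (p := fun q => e q < MX m e)
  rw [Finset.card_range] at hy
  omega

lemma AvNV {m : ℕ} {e : ℕ → ℕ} {V : ℕ} :
    Av m e V + ((range m).filter (fun q => e q + 1 = V)).card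
      = ((range m).filter (fun q => e q < V)).card := by
  have h3 : Av m e V = ((range m).filter (fun q => e q + 2 ≤ V)).card := rfl
  rw [h3, ← card_filter_or_disj (s := range m) (p := fun q => e q + 2 ≤ V)
    (q := fun q => e q + 1 = V) (fun x _ hx => by omega)]
  congr 1
  apply filter_congr
  intro x _
  constructor <;> intro <;> omega

lemma MX_pos_of_nonzero {m : ℕ} {e : ℕ → ℕ} {q : ℕ} (hq : q < m) (hv : 1 ≤ e q) :
    1 ≤ MX m e := le_trans hv (le_MX hq)

lemma exists_MX_letter {m : ℕ} {e : ℕ → ℕ} (hm : 1 ≤ m) :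
    ∃ q, q < m ∧ e q = MX m e := by
  obtain ⟨b, hb, hbe⟩ := Finset.exists_mem_eq_sup (range m) (by
    rw [Finset.nonempty_range_iff]; omega) e
  exact ⟨b, mem_range.mp hb, hbe.symm⟩

/-- The first `MX`-letter. -/
lemma exists_first_MX {m : ℕ} (e : ℕ → ℕ) (hm : 1 ≤ m) :
    ∃ q1, q1 < m ∧ e q1 = MX m e ∧ (∀ x, x < q1 → e x ≠ MX m e) := by
  classical
  obtain ⟨q0, hq0m, hq0v⟩ := exists_MX_letter (e := e) hm
  have hSne : ((range m).filter (fun q => e q = MX m e)).Nonempty :=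
    ⟨q0, by simp only [mem_filter, mem_range]; exact ⟨hq0m, hq0v⟩⟩
  have hq1S := Finset.min'_mem _ hSne
  simp only [mem_filter, mem_range] at hq1S
  refine ⟨_, hq1S.1, hq1S.2, ?_⟩
  intro x hx hex
  have hxmem : x ∈ (range m).filter (fun q => e q = MX m e) := by
    simp only [mem_filter, mem_range]
    exact ⟨by omega, hex⟩
  have := Finset.min'_le _ x hxmem
  omega

/-- The first `MX`-letter has an `(MX-1)`-letter as predecessor. -/
lemma first_max_letter {m : ℕ} {e : ℕ → ℕ} (hw : Word m e) (hm : 1 ≤ m)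
    (hMX : 1 ≤ MX m e) :
    ∃ q1, q1 < m ∧ e q1 = MX m e ∧ 1 ≤ q1 ∧ e (q1 - 1) + 1 = MX m e ∧
      (∀ x, x < q1 → e x ≠ MX m e) := by
  obtain ⟨q1, hq1m, hq1v, hmin⟩ := exists_first_MX e hm
  have hq1pos : 1 ≤ q1 := by
    by_contra h
    have h0 : q1 = 0 := by omega
    have := hw.2 0 (Or.inr rfl)
    rw [h0] at hq1v
    omega
  have hstep : e q1 ≤ e (q1 - 1) + 1 := by
    have := hw.1 (q1-1) (by omega)
    have hpp : q1 - 1 + 1 = q1 := by omega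
    rwa [hpp] at this
  have hle : e (q1-1) ≤ MX m e := le_MX (by omega)
  have hne : e (q1 - 1) ≠ MX m e := hmin (q1-1) (by omega)
  exact ⟨q1, hq1m, hq1v, hq1pos, by omega, hmin⟩

/-- Reconstruction: `(c p, p)` is determined by the deleted word and `Jv`. -/
theorem recon {n : ℕ} {c : ℕ → ℕ} {p : ℕ} (hw : Word n c) (hm : MaxLast n c p) :
    c p = Vsel (n-1) (del c p) (Jv n c p) ∧ p = Psel (n-1) (del c p) (Jv n c p) := by
  have hp1 : 1 ≤ p := maxlast_pos hw hm
  have hpn : p < n := hm.1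
  have hn2 : 2 ≤ n := by omega
  have hVpos : 1 ≤ c p := hm.2.1
  set m := n - 1 with hm_def
  set e := del c p with he_def
  set J := Jv n c p with hJ_def
  set V := c p with hV_def
  have heq : ∀ q, q < p → e q = c q := by
    intro q hq; rw [he_def]; unfold del; rw [if_pos hq]
  have heq2 : ∀ q, p ≤ q → e q = c (q+1) := by
    intro q hq; rw [he_def]; unfold del; rw [if_neg (by omega)]
  have hVge : MX m e ≤ V := by
    apply Finset.sup_le
    intro q hq
    rw [mem_range] at hq
    by_cases hqp : q < p
    · have := hm.2.2 q (by omega) (by omega)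
      rw [heq q hqp]
      unfold klt at this; omega
    · have := hm.2.2 (q+1) (by omega) (by omega)
      rw [heq2 q (by omega)]
      unfold klt at this; omega
  have hVle : V ≤ MX m e + 1 ∧ (e (p-1) + 1 = V ∨ e (p-1) = V) := by
    have h1 : c p ≤ c (p-1) + 1 := by
      have := hw.1 (p-1) (by omega)
      have hpp : p - 1 + 1 = p := by omega
      rwa [hpp] at this
    have h2 : e (p-1) = c (p-1) := heq _ (by omega)
    have h3 : e (p-1) ≤ MX m e := le_MX (by omega)
    have h4 : c p = V := hV_def.symm
    constructor
    · omega
    · omega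
  obtain ⟨hVle, hpred⟩ := hVle
  have hAveq : Av m e V = ((range m).filter (fun q => e q + 2 ≤ V)).card := rfl
  have hsplit : J = Av m e V + ((range m).filter (fun q => e q + 1 = V ∧ q < p)).card := by
    rw [hJ_def, Jv_split hm]
    rfl
  have hcomp := MX_comp (m := m) (e := e)
  clear_value m e J V
  -- determine V
  have hVdet : V = Vsel m e J := by
    unfold Vsel
    by_cases hcase : V = MX m e
    · rw [if_pos]
      · exact hcase
      refine ⟨?_, by omega⟩
      have h1 : ((range m).filter (fun q => e q + 2 ≤ V)).card
            + ((range m).filter (fun q => e q + 1 = V ∧ q < p)).card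
          ≤ ((range m).filter (fun q => e q < MX m e)).card := by
        rw [← card_filter_or_disj (fun x _ hx => by omega)]
        apply Finset.card_le_card
        intro x hx
        simp only [mem_filter, mem_range] at hx ⊢
        rcases hx.2 with h | ⟨h, _⟩ <;> exact ⟨hx.1, by omega⟩
      omega
    · rw [if_neg]
      · omega
      rintro ⟨hJNM, hMX1⟩
      have htct : 0 < ((range m).filter (fun q => e q + 1 = V ∧ q < p)).card := by
        rw [Finset.card_pos]
        refine ⟨p - 1, ?_⟩
        simp only [mem_filter, mem_range]
        have h3 : e (p-1) ≤ MX m e := le_MX (by omega)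
        exact ⟨by omega, by omega, by omega⟩
      have hAv : Av m e V = ((range m).filter (fun q => e q < MX m e)).card := by
        rw [hAveq]
        congr 1
        apply filter_congr
        intro x _
        constructor <;> intro <;> omega
      omega
  refine ⟨hVdet, ?_⟩
  have htct : ((range m).filter (fun q => e q + 1 = V ∧ q < p)).card = J - Av m e V := by
    omega
  unfold Psel
  have hTmem : p - 1 ∈ Tset m e J := by
    rw [mem_Tset_iff, ← hVdet]
    refine ⟨by omega, ?_⟩
    rcases hpred with h | h
    · refine Or.inr ⟨h, ?_⟩
      have hc : cnt m e V (p-1) = ((range m).filter (fun q => e q + 1 = V ∧ q < p)).card := by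
        unfold cnt
        congr 1
        apply filter_congr
        intro x _
        constructor <;> (intro hx; exact ⟨hx.1, by omega⟩)
      omega
    · exact Or.inl h
  have hTub : ∀ q ∈ Tset m e J, q ≤ p - 1 := by
    intro q hq
    rw [mem_Tset_iff, ← hVdet] at hq
    obtain ⟨hqm, hq⟩ := hq
    by_contra hqp
    have hqge : p ≤ q := by omega
    rcases hq with hq | ⟨hq, hqc⟩
    · have := hm.2.2 (q+1) (by omega) (by omega)
      rw [heq2 q hqge] at hq
      unfold klt at this
      omega
    · have hsub : insert q ((range m).filter (fun u => e u + 1 = V ∧ u < p))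
          ⊆ (range m).filter (fun u => e u + 1 = V ∧ u ≤ q) := by
        intro x hx
        rcases Finset.mem_insert.mp hx with rfl | hx
        · simp only [mem_filter, mem_range]; exact ⟨hqm, hq, le_rfl⟩
        · simp only [mem_filter, mem_range] at hx ⊢
          exact ⟨hx.1, hx.2.1, by omega⟩
      have hcard := Finset.card_le_card hsub
      rw [Finset.card_insert_of_notMem (by simp only [mem_filter]; omega)] at hcard
      unfold cnt at hqc
      omega
  have hfin : (Tset m e J).sup id = p - 1 :=
    le_antisymm (Finset.sup_le (fun q hq => hTub q hq)) (Finset.le_sup (f := id) hTmem)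
  omega

theorem insert_unique {n : ℕ} {c d : ℕ → ℕ} {p p' : ℕ}
    (hwc : Word n c) (hwd : Word n d)
    (hmc : MaxLast n c p) (hmd : MaxLast n d p')
    (hdel : del c p = del d p') (hJ : Jv n c p = Jv n d p') : c = d := by
  obtain ⟨hV1, hp1⟩ := recon hwc hmc
  obtain ⟨hV2, hp2⟩ := recon hwd hmd
  rw [hdel, hJ] at hV1 hp1
  have hpp : p = p' := hp1.trans hp2.symm
  have hVV : c p = d p' := hV1.trans hV2.symm
  calc c = ins (del c p) p (c p) := (ins_del hmc.1).symm
    _ = d := by rw [hdel, hVV, hpp]; exact ins_del hmd.1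

/-- Existence of the insertion realizing a given `J`. -/
theorem insert_exists {m : ℕ} {e : ℕ → ℕ} {J : ℕ} (hw : Word m e)
    (hJ1 : 1 ≤ J) (hJm : J ≤ m) (hJlo : ∀ k, J ≤ k → Z m e k = 0) :
    ∃ c p, Word (m+1) c ∧ MaxLast (m+1) c p ∧ del c p = e ∧ Jv (m+1) c p = J := by
  classical
  set V := Vsel m e J with hV_def
  set t := J - Av m e V with ht_def
  have hm1 : 1 ≤ m := by omega
  have hAveq : Av m e V = ((range m).filter (fun q => e q + 2 ≤ V)).card := rfl
  have hVpos : 1 ≤ V := by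
    rw [hV_def]; unfold Vsel; split
    · rename_i h; exact h.2
    · omega
  have hVMX : V = MX m e ∨ V = MX m e + 1 := by
    rw [hV_def]; unfold Vsel; split
    · exact Or.inl rfl
    · exact Or.inr rfl
  clear_value V t
  have hAvNV := AvNV (m := m) (e := e) (V := V)
  have hcomp := MX_comp (m := m) (e := e)
  have hmain : Av m e V ≤ J ∧ 1 ≤ t ∧ t ≤ ((range m).filter (fun q => e q + 1 = V)).card ∧
      (V = MX m e → ∃ pe, MaxLast m e pe ∧ e pe = MX m e ∧
        Av m e V + ((range m).filter (fun q => e q + 1 = V ∧ q < pe)).card ≤ J) := by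
    rcases hVMX with hV | hV
    · have hMX1 : 1 ≤ MX m e := by omega
      have hJNM : J + NMx m e ≤ m := by
        rw [hV_def] at hV
        unfold Vsel at hV
        by_contra h
        rw [if_neg (by omega)] at hV
        omega
      obtain ⟨pe0, hpe0m, hpe0v⟩ := exists_MX_letter (e := e) hm1
      obtain ⟨pe, hpe⟩ := exists_maxlast (n := m) (c := e) ⟨pe0, hpe0m, by omega⟩
      have hepe : e pe = MX m e := by
        have h1 : e pe ≤ MX m e := le_MX hpe.1
        have h2 : e pe0 ≤ e pe := le_max_of_maxlast hpe hpe0m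
        omega
      have hJve : Jv m e pe ≤ J := by
        by_contra h
        have := (Z_ne_zero_iff hw hpe J).mpr (by omega)
        exact this (hJlo J le_rfl)
      have hsplit := Jv_split_self hpe
      rw [hepe, ← hV] at hsplit
      have hcomp2 := hcomp
      rw [← hV] at hcomp2
      have hAvJ : Av m e V ≤ J := by omega
      refine ⟨hAvJ, ?_, ?_, fun _ => ⟨pe, hpe, hepe, by omega⟩⟩
      · -- 1 ≤ t
        have hex : 0 < ((range m).filter (fun q => e q + 1 = V ∧ q < pe)).card := by
          rw [Finset.card_pos]
          obtain ⟨q1, hq1m, hq1v, hq1pos, hq1pred, hq1min⟩ := first_max_letter hw hm1 hMX1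
          refine ⟨q1 - 1, ?_⟩
          simp only [mem_filter, mem_range]
          have hq1pe : q1 ≤ pe := by
            by_cases h : q1 = pe
            · omega
            · have := hpe.2.2 q1 hq1m h
              unfold klt at this
              omega
          exact ⟨by omega, by omega, by omega⟩
        omega
      · -- t ≤ NV1
        have hsub : ((range m).filter (fun q => e q + 1 = V ∧ q < pe)).card
            ≤ ((range m).filter (fun q => e q + 1 = V)).card := by
          apply Finset.card_le_card
          intro x hx
          simp only [mem_filter] at hx ⊢
          exact ⟨hx.1, hx.2.1⟩
        omega
    · -- V = MX + 1
      have hJNM : m < J + NMx m e := by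
        by_cases hMX1 : 1 ≤ MX m e
        · rw [hV_def] at hV
          unfold Vsel at hV
          by_contra h
          rw [if_pos (by omega)] at hV
          omega
        · have hNM : NMx m e = m := by
            unfold NMx
            rw [Finset.filter_true_of_mem, Finset.card_range]
            intro x hx
            have := le_MX (m := m) (e := e) (mem_range.mp hx)
            omega
          omega
      have hAv : Av m e V = ((range m).filter (fun q => e q < MX m e)).card := by
        rw [hAveq]
        congr 1
        apply filter_congr
        intro x _
        constructor <;> intro <;> omega
      have hNV1 : ((range m).filter (fun q => e q + 1 = V)).card = NMx m e := by
        unfold NMx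
        congr 1
        apply filter_congr
        intro x _
        constructor <;> intro <;> omega
      exact ⟨by omega, by omega, by omega, fun h => by omega⟩
  obtain ⟨hAvJ, ht1, htNV, hVMXcase⟩ := hmain
  have hAvt : Av m e V + t = J := by clear hVMXcase; omega
  -- T nonempty
  have hTne : (Tset m e J).Nonempty := by
    rcases hVMX with hV | hV
    · obtain ⟨pe, hpe, hepe, _⟩ := hVMXcase hV
      exact ⟨pe, mem_Tset_iff.mpr ⟨hpe.1, Or.inl (by rw [← hV_def]; omega)⟩⟩
    · obtain ⟨q1, hq1m, hq1v, hq1min⟩ := exists_first_MX e hm1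
      refine ⟨q1, mem_Tset_iff.mpr ⟨hq1m, Or.inr ⟨by rw [← hV_def]; omega, ?_⟩⟩⟩
      rw [← hV_def, ← ht_def]
      have hcnt1 : cnt m e V q1 = 1 := by
        unfold cnt
        rw [Finset.card_eq_one]
        refine ⟨q1, ?_⟩
        apply Finset.eq_singleton_iff_unique_mem.mpr
        constructor
        · simp only [mem_filter, mem_range]
          exact ⟨hq1m, by omega, le_rfl⟩
        · intro x hx
          simp only [mem_filter, mem_range] at hx
          by_contra hne
          exact hq1min x (by omega) (by omega)
      omega
  set maxT := (Tset m e J).sup id with hmaxT_def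
  have hmaxTmem : maxT ∈ Tset m e J := by
    obtain ⟨b, hb, hbe⟩ := Finset.exists_mem_eq_sup (Tset m e J) hTne id
    rw [hmaxT_def]
    simp only [id] at hbe
    rw [hbe]
    exact hb
  have hmaxTub : ∀ q ∈ Tset m e J, q ≤ maxT := fun q hq => Finset.le_sup (f := id) hq
  clear_value maxT
  have hmaxTmem2 := mem_Tset_iff.mp hmaxTmem
  rw [← hV_def, ← ht_def] at hmaxTmem2
  obtain ⟨hmaxTm, hmaxTmem'⟩ := hmaxTmem2
  -- cnt maxT = t
  have hcnt : cnt m e V maxT = t := by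
    have hub : cnt m e V maxT ≤ t := by
      rcases hmaxTmem' with hq | ⟨_, hq⟩
      · -- maxT is a V-letter
        have hVMXc : V = MX m e := by
          have := le_MX (m := m) (e := e) hmaxTm
          rcases hVMX with h | h
          · exact h
          · omega
        obtain ⟨pe, hpe, hepe, hJbound⟩ := hVMXcase hVMXc
        have hpeT : pe ∈ Tset m e J := mem_Tset_iff.mpr ⟨hpe.1, Or.inl (by rw [← hV_def]; omega)⟩
        have h1 : pe ≤ maxT := hmaxTub pe hpeT
        have h2 : maxT = pe := by
          by_contra h
          have := hpe.2.2 maxT hmaxTm h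
          unfold klt at this
          omega
        have hc : cnt m e V maxT = ((range m).filter (fun q => e q + 1 = V ∧ q < pe)).card := by
          unfold cnt
          congr 1
          apply filter_congr
          intro x _
          constructor
          · rintro ⟨hx1, hx2⟩
            refine ⟨hx1, ?_⟩
            rcases Nat.lt_or_ge x pe with h | h
            · exact h
            · exfalso
              have hxe : x = pe := by omega
              subst hxe
              omega
          · rintro ⟨hx1, hx2⟩
            exact ⟨hx1, by omega⟩
        omega
      · exact hq
    have hlb : t ≤ cnt m e V maxT := by
      by_contra hlt
      have hex : ∃ q, q ∈ (range m).filter (fun q => e q + 1 = V ∧ maxT < q) := by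
        by_contra hno
        push_neg at hno
        have hsub : (range m).filter (fun q => e q + 1 = V)
            ⊆ (range m).filter (fun u => e u + 1 = V ∧ u ≤ maxT) := by
          intro x hx
          simp only [mem_filter, mem_range] at hx ⊢
          refine ⟨hx.1, hx.2, ?_⟩
          by_contra h
          have := hno x
          simp only [mem_filter, mem_range] at this
          omega
        have hcard := Finset.card_le_card hsub
        unfold cnt at hlt
        omega
      obtain ⟨q, hqmem⟩ := hex
      have hSne : ((range m).filter (fun q => e q + 1 = V ∧ maxT < q)).Nonempty := ⟨q, hqmem⟩
      set S := (range m).filter (fun q => e q + 1 = V ∧ maxT < q) with hS_def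
      have hq0S : S.min' hSne ∈ S := Finset.min'_mem S hSne
      set q0 := S.min' hSne with hq0_def
      rw [hS_def] at hq0S
      simp only [mem_filter, mem_range] at hq0S
      obtain ⟨hq0m, hq0v, hq0gt⟩ := hq0S
      have hq0min : ∀ x, x < q0 → ¬ (x < m ∧ e x + 1 = V ∧ maxT < x) := by
        intro x hx hcon
        have : q0 ≤ x := Finset.min'_le S x (by
          rw [hS_def]; simp only [mem_filter, mem_range]; exact hcon)
        omega
      have hcnteq : cnt m e V q0 = cnt m e V maxT + 1 := by
        unfold cnt
        have hseteq : (range m).filter (fun u => e u + 1 = V ∧ u ≤ q0)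
            = insert q0 ((range m).filter (fun u => e u + 1 = V ∧ u ≤ maxT)) := by
          apply Finset.ext
          intro x
          simp only [Finset.mem_insert, mem_filter, mem_range]
          constructor
          · rintro ⟨hx1, hx2, hx3⟩
            by_cases h : x ≤ maxT
            · exact Or.inr ⟨hx1, hx2, h⟩
            · left
              by_contra hne
              exact hq0min x (by omega) ⟨hx1, hx2, by omega⟩
          · rintro (rfl | ⟨hx1, hx2, hx3⟩)
            · exact ⟨hq0m, hq0v, le_rfl⟩
            · exact ⟨hx1, hx2, by omega⟩
        rw [hseteq, Finset.card_insert_of_notMem (by simp only [mem_filter]; omega)]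
      have hq0T : q0 ∈ Tset m e J :=
        mem_Tset_iff.mpr ⟨hq0m, Or.inr ⟨by rw [← hV_def]; omega, by rw [← hV_def, ← ht_def]; omega⟩⟩
      have := hmaxTub q0 hq0T
      omega
    omega
  -- build c
  set p := maxT + 1 with hp_def
  set cc := ins e p V with hcc_def
  have hccp : cc p = V := by rw [hcc_def]; unfold ins; rw [if_neg (by omega), if_pos rfl]
  have hcclt : ∀ i, i < p → cc i = e i := by
    intro i hi; rw [hcc_def]; unfold ins; rw [if_pos hi]
  have hccgt : ∀ i, p < i → cc i = e (i-1) := by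
    intro i hi; rw [hcc_def]; unfold ins; rw [if_neg (by omega), if_neg (by omega)]
  have hdel : del cc p = e := by rw [hcc_def]; exact del_ins e p V
  clear_value p cc
  have hpm : p ≤ m := by omega
  have hemaxT : e maxT = V ∨ e maxT + 1 = V := by
    rcases hmaxTmem' with h | ⟨h, _⟩
    · exact Or.inl h
    · exact Or.inr h
  have hnoVbeyond : ∀ q, q < m → maxT < q → e q < V := by
    intro q hqm hqgt
    have hle : e q ≤ MX m e := le_MX hqm
    by_contra h
    have heqV : e q = V := by rcases hVMX with hV | hV <;> omega
    have hqT : q ∈ Tset m e J := mem_Tset_iff.mpr ⟨hqm, Or.inl (by rw [← hV_def]; omega)⟩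
    have := hmaxTub q hqT
    omega
  have hword : Word (m+1) cc := by
    constructor
    · intro i hi
      rcases Nat.lt_trichotomy (i+1) p with h | h | h
      · rw [hcclt (i+1) h, hcclt i (by omega)]
        exact hw.1 i (by omega)
      · rw [h, hccp, hcclt i (by omega)]
        have hieq : i = maxT := by omega
        rw [hieq]
        rcases hemaxT with h' | h' <;> omega
      · rw [hccgt (i+1) h]
        by_cases h2 : i = p
        · rw [h2, hccp]
          simp only [Nat.add_sub_cancel]
          have h3 : e p ≤ MX m e := le_MX (by omega)
          rcases hVMX with hV | hV <;> omega
        · rw [hccgt i (by omega)]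
          have h4 : i - 1 + 1 = i := by omega
          have hstep := hw.1 (i-1) (by omega)
          rw [h4] at hstep
          have h5 : i + 1 - 1 = i := by omega
          rw [h5]
          exact hstep
    · intro i hi
      rcases hi with hi | hi
      · rw [hccgt i (by omega)]
        exact hw.2 _ (Or.inl (by omega))
      · rw [hi, hcclt 0 (by omega)]
        exact hw.2 0 (Or.inr rfl)
  have hml : MaxLast (m+1) cc p := by
    refine ⟨by omega, by omega, ?_⟩
    intro r hr hrp
    rcases Nat.lt_trichotomy r p with h | h | h
    · rw [hcclt r h, hccp]
      have hle : e r ≤ MX m e := le_MX (by omega)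
      rcases Nat.lt_or_ge (e r) V with h2 | h2
      · exact Or.inl h2
      · right
        refine ⟨?_, h⟩
        rcases hVMX with hV | hV <;> omega
    · omega
    · rw [hccgt r h, hccp]
      exact Or.inl (hnoVbeyond (r-1) (by omega) (by omega))
  have hJv : Jv (m+1) cc p = J := by
    have hsp := Jv_split hml
    simp only [Nat.add_sub_cancel] at hsp
    rw [hdel, hccp] at hsp
    have h2 : ((range m).filter (fun q => e q + 1 = V ∧ q < p)).card = t := by
      rw [← hcnt]
      unfold cnt
      congr 1
      apply filter_congr
      intro x _
      constructor <;> (intro hx; exact ⟨hx.1, by omega⟩)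
    rw [hsp, h2, ← hAveq]
    exact hAvt
  exact ⟨cc, p, hword, hml, hdel, hJv⟩




/-- If `Z` vanishes at 0, the word is the zero word. -/
lemma Z_zero_imp_zero {n : ℕ} {c : ℕ → ℕ} (hw : Word n c) (hn : 1 ≤ n)
    (h0 : Z n c 0 = 0) : ∀ r, r < n → c r = 0 := by
  have hc0 : c 0 = 0 := hw.2 0 (Or.inr rfl)
  have hrnk0 : rnk n c 0 = 0 := by
    unfold rnk
    rw [Finset.card_eq_zero, Finset.filter_eq_empty_iff]
    intro r _
    rw [hc0]
    unfold klt
    omega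
  have hZ0 : Z n c 0 = vl n c 0 := by
    conv_lhs => rw [← hrnk0]
    exact Z_rnk (show 0 < n by omega)
  rw [hZ0] at h0
  unfold vl at h0
  rw [Finset.card_eq_zero, Finset.filter_eq_empty_iff] at h0
  intro r hr
  rcases Nat.eq_zero_or_pos r with rfl | hrpos
  · exact hc0
  · have := h0 (mem_range.mpr hr)
    rw [hc0] at this
    unfold klt at this
    omega

def Stair (n : ℕ) (l : ℕ → ℕ) : Prop :=
  (∀ j k, j ≤ k → l k ≤ l j) ∧ (∀ k, k < n → l k + k + 1 ≤ n) ∧ (∀ k, n ≤ k → l k = 0)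

theorem main (n : ℕ) :
    (∀ c, Word n c → Stair n (Z n c)) ∧
    (∀ c d, Word n c → Word n d → (∀ k, Z n c k = Z n d k) → c = d) ∧
    (∀ l, Stair n l → ∃ c, Word n c ∧ ∀ k, Z n c k = l k) := by
  induction n with
  | zero =>
    refine ⟨?_, ?_, ?_⟩
    · intro c hw
      have hZ : ∀ k, Z 0 c k = 0 := fun k => Z_zero_of_ge (by omega)
      exact ⟨fun j k hjk => by rw [hZ, hZ], fun k hk => by omega, fun k _ => hZ k⟩
    · intro c d hwc hwd _
      funext i
      rw [hwc.2 i (Or.inl (by omega)), hwd.2 i (Or.inl (by omega))]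
    · intro l hst
      refine ⟨fun _ => 0, ⟨fun i hi => by simp, fun i _ => rfl⟩, fun k => ?_⟩
      rw [Z_zero_word (fun q hq => rfl) k, hst.2.2 k (by omega)]
  | succ m ih =>
    obtain ⟨ihS, ihU, ihE⟩ := ih
    refine ⟨?_, ?_, ?_⟩
    · -- Stair
      intro c hw
      by_cases hz : ∀ r, r < m+1 → c r = 0
      · have hZ : ∀ k, Z (m+1) c k = 0 := Z_zero_word hz
        exact ⟨fun j k hjk => by rw [hZ, hZ], fun k hk => by rw [hZ]; omega, fun k _ => hZ k⟩
      · push_neg at hz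
        obtain ⟨r0, hr0, hr0v⟩ := hz
        obtain ⟨p, hp⟩ := exists_maxlast (n := m+1) (c := c) ⟨r0, hr0, by omega⟩
        have hw' : Word m (del c p) := by
          have := peel_word hw hp
          simpa using this
        have hS' := ihS _ hw'
        have hpeel : ∀ k, Z (m+1) c k = Z m (del c p) k
            + (if k < Jv (m+1) c p then 1 else 0) := by
          intro k
          have := peel_Z hw hp k
          simpa using this
        have hJle : Jv (m+1) c p ≤ m := by
          have := Jv_le hp
          simpa using this
        refine ⟨?_, ?_, ?_⟩
        · intro j k hjk
          rw [hpeel j, hpeel k]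
          have h1 := hS'.1 j k hjk
          have h2 : (if k < Jv (m+1) c p then 1 else 0)
              ≤ (if j < Jv (m+1) c p then (1:ℕ) else 0) := by
            split <;> split <;> omega
          omega
        · intro k hk
          rw [hpeel k]
          by_cases hkJ : k < Jv (m+1) c p
          · rw [if_pos hkJ]
            have hkm : k < m := by omega
            have := hS'.2.1 k hkm
            omega
          · rw [if_neg hkJ]
            have hz' : Z m (del c p) k = 0 := by
              have := peel_Z_zero hw hp (k := k) (by omega)
              simpa using this
            omega
        · intro k hk
          exact Z_zero_of_ge hk
    · -- Uniqueness
      intro c d hwc hwd hZ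
      by_cases hz : Z (m+1) c 0 = 0
      · have hc0 := Z_zero_imp_zero hwc (by omega) hz
        have hd0 := Z_zero_imp_zero hwd (by omega) (by rw [← hZ 0]; exact hz)
        funext i
        by_cases him : i < m+1
        · rw [hc0 i him, hd0 i him]
        · rw [hwc.2 i (Or.inl (by omega)), hwd.2 i (Or.inl (by omega))]
      · have hc_ne : ∃ r, r < m+1 ∧ 1 ≤ c r := by
          by_contra h
          push_neg at h
          exact hz (Z_zero_word (fun q hq => by have := h q hq; omega) 0)
        have hd_ne : ∃ r, r < m+1 ∧ 1 ≤ d r := by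
          by_contra h
          push_neg at h
          rw [hZ 0] at hz
          exact hz (Z_zero_word (fun q hq => by have := h q hq; omega) 0)
        obtain ⟨pc, hpc⟩ := exists_maxlast hc_ne
        obtain ⟨pd, hpd⟩ := exists_maxlast hd_ne
        have hJc := Z_ne_zero_iff hwc hpc
        have hJd := Z_ne_zero_iff hwd hpd
        have hJeq : Jv (m+1) c pc = Jv (m+1) d pd := by
          have h1 : ∀ k, (k < Jv (m+1) c pc ↔ k < Jv (m+1) d pd) := by
            intro k
            rw [← hJc k, hZ k, hJd k]
          have h2 := h1 (Jv (m+1) c pc)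
          have h3 := h1 (Jv (m+1) d pd)
          omega
        have hdel_eq : del c pc = del d pd := by
          apply ihU _ _ (by simpa using peel_word hwc hpc) (by simpa using peel_word hwd hpd)
          intro k
          have e1 := peel_Z hwc hpc k
          have e2 := peel_Z hwd hpd k
          simp only [Nat.add_sub_cancel] at e1 e2
          by_cases hk : k < Jv (m+1) c pc
          · rw [if_pos hk] at e1
            rw [if_pos (by rw [← hJeq]; exact hk)] at e2
            have := hZ k
            omega
          · have z1 : Z m (del c pc) k = 0 := by
              have := peel_Z_zero hwc hpc (k := k) (by omega)
              simpa using this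
            have z2 : Z m (del d pd) k = 0 := by
              have := peel_Z_zero hwd hpd (k := k) (by omega)
              simpa using this
            rw [z1, z2]
        exact insert_unique hwc hwd hpc hpd hdel_eq hJeq
    · -- Existence
      intro l hst
      by_cases hz : l 0 = 0
      · have hall : ∀ k, l k = 0 := fun k => by
          have := hst.1 0 k (by omega)
          omega
        refine ⟨fun _ => 0, ⟨fun i hi => by simp, fun i _ => rfl⟩, fun k => ?_⟩
        rw [Z_zero_word (fun q hq => rfl) k, hall k]
      · have hfind : ∃ k, l k = 0 := ⟨m+1, hst.2.2 (m+1) le_rfl⟩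
        classical
        set J := Nat.find hfind with hJ_def
        have hJspec : l J = 0 := Nat.find_spec hfind
        have hJmin : ∀ k, k < J → l k ≠ 0 := fun k hk => Nat.find_min hfind hk
        have hJiff : ∀ k, k < J ↔ l k ≠ 0 := by
          intro k
          constructor
          · exact hJmin k
          · intro hk
            by_contra h
            have : l k ≤ l J := hst.1 J k (by omega)
            omega
        have hJ1 : 1 ≤ J := by
          have := (hJiff 0).mpr hz
          omega
        have hJm : J ≤ m := by
          have hlm : l m = 0 := by
            have := hst.2.1 m (by omega)
            omega
          by_contra h
          have := hJmin m (by omega)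
          omega
        have hst' : Stair m (fun k => l k - 1) := by
          refine ⟨fun j k hjk => ?_, fun k hk => ?_, fun k hk => ?_⟩
          · show l k - 1 ≤ l j - 1
            have := hst.1 j k hjk
            omega
          · show l k - 1 + k + 1 ≤ m
            have := hst.2.1 k (by omega)
            omega
          · show l k - 1 = 0
            have hm0 : l m = 0 := by
              have := hst.2.1 m (by omega)
              omega
            have := hst.1 m k hk
            omega
        obtain ⟨e, hwe, hZe⟩ := ihE _ hst'
        have hJlo : ∀ k, J ≤ k → Z m e k = 0 := by
          intro k hk
          rw [hZe k]
          have hlk : l k = 0 := by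
            have := hst.1 J k hk
            omega
          omega
        obtain ⟨c, p, hwc, hmc, hdelc, hJvc⟩ := insert_exists hwe hJ1 hJm hJlo
        refine ⟨c, hwc, fun k => ?_⟩
        have hpeel := peel_Z hwc hmc k
        simp only [Nat.add_sub_cancel] at hpeel
        rw [hdelc, hJvc, hZe k] at hpeel
        by_cases hk : k < J
        · rw [if_pos hk] at hpeel
          have : l k ≠ 0 := (hJiff k).mp hk
          omega
        · rw [if_neg hk] at hpeel
          have hlk : l k = 0 := by
            have := hst.1 J k (by omega)
            omega
          omega




lemma rep_mono {n a b : ℕ} (h : a < b) : n * a + n ≤ n * b := by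
  have := Nat.mul_le_mul_left n (show a + 1 ≤ b by omega)
  rw [Nat.mul_add, Nat.mul_one] at this
  omega

lemma decomp_unique {n r k r' k' : ℕ} (hr : r < n) (hr' : r' < n)
    (h : r + n * k = r' + n * k') : r = r' ∧ k = k' := by
  rcases Nat.lt_trichotomy k k' with hk | hk | hk
  · have := rep_mono (n := n) hk
    omega
  · subst hk
    omega
  · have := rep_mono (n := n) hk
    omega

/-- The semimodule attached to an area word. -/
def Dset (n : ℕ) (c : ℕ → ℕ) : Set ℕ := {x | ∃ r k, r < n ∧ x = r + n * k ∧ c r ≤ k}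

lemma Dset_step_n {n : ℕ} {c : ℕ → ℕ} {x : ℕ} (hx : x ∈ Dset n c) : x + n ∈ Dset n c := by
  obtain ⟨r, k, hr, rfl, hk⟩ := hx
  exact ⟨r, k+1, hr, by ring, by omega⟩

lemma Dset_step_n1 {n : ℕ} {c : ℕ → ℕ} (hw : Word n c) {x : ℕ} (hx : x ∈ Dset n c) :
    x + (n+1) ∈ Dset n c := by
  obtain ⟨r, k, hr, rfl, hk⟩ := hx
  by_cases h : r + 1 < n
  · exact ⟨r+1, k+1, h, by ring, by have := hw.1 r h; omega⟩
  · have hrn : r + 1 = n := by omega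
    refine ⟨0, k+2, by omega, ?_, ?_⟩
    · have hd : n * (k+2) = n * k + n + n := by ring
      omega
    · rw [hw.2 0 (Or.inr rfl)]
      omega

lemma Dset_semimodule {n : ℕ} {c : ℕ → ℕ} (hn : 1 ≤ n) (hw : Word n c) :
    IsSemiModule n (n+1) (Dset n c) := by
  constructor
  · exact ⟨0, 0, by omega, by ring, by rw [hw.2 0 (Or.inr rfl)]⟩
  · intro x hx g hg
    obtain ⟨a, b, rfl⟩ := hg
    have hmuln : ∀ a x, x ∈ Dset n c → x + a * n ∈ Dset n c := by
      intro a
      induction a with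
      | zero => intro x hx; simpa using hx
      | succ a iha =>
        intro x hx
        have h1 : x + (a+1) * n = (x + n) + a * n := by ring
        rw [h1]
        exact iha _ (Dset_step_n hx)
    have hmuln1 : ∀ b x, x ∈ Dset n c → x + b * (n+1) ∈ Dset n c := by
      intro b
      induction b with
      | zero => intro x hx; simpa using hx
      | succ b ihb =>
        intro x hx
        have h1 : x + (b+1) * (n+1) = (x + (n+1)) + b * (n+1) := by ring
        rw [h1]
        exact ihb _ (Dset_step_n1 hw hx)
    have h1 : x + (a * n + b * (n+1)) = (x + a * n) + b * (n+1) := by ring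
    rw [h1]
    exact hmuln1 _ _ (hmuln _ _ hx)

/-- Membership of the basis. -/
lemma mem_basis_iff {n : ℕ} {c : ℕ → ℕ} (hn : 1 ≤ n) {x : ℕ} :
    x ∈ pBasis n (Dset n c) ↔ ∃ r, r < n ∧ x = r + n * c r := by
  constructor
  · rintro ⟨hx, hnx⟩
    obtain ⟨r, k, hr, rfl, hk⟩ := hx
    refine ⟨r, hr, ?_⟩
    rcases Nat.eq_or_lt_of_le hk with heq | hlt
    · rw [heq]
    · exfalso
      apply hnx
      refine ⟨r + n * (k-1), ⟨r, k-1, hr, rfl, by omega⟩, ?_⟩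
      have hd : n * (k-1) + n = n * k := by
        rw [← Nat.mul_succ]
        congr 1
        omega
      simp only
      omega
  · rintro ⟨r, hr, rfl⟩
    constructor
    · exact ⟨r, c r, hr, rfl, le_rfl⟩
    · rintro ⟨y, hy, hyx⟩
      obtain ⟨r', k', hr', rfl, hk'⟩ := hy
      simp only at hyx
      have heq2 : r' + n * (k' + 1) = r + n * c r := by rw [← hyx]; ring
      obtain ⟨h1, h2⟩ := decomp_unique hr' hr heq2
      rw [h1] at hk'
      omega

/-- Key order matches the natural order of basis elements. -/
lemma blt_iff {n : ℕ} {a i b j : ℕ} (hi : i < n) (hj : j < n) :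
    klt a i b j ↔ i + n * a < j + n * b := by
  unfold klt
  constructor
  · rintro (h | ⟨h, h'⟩)
    · have := rep_mono (n := n) h
      omega
    · subst h
      omega
  · intro h
    rcases Nat.lt_trichotomy a b with h2 | h2 | h2
    · exact Or.inl h2
    · subst h2
      right
      constructor
      · rfl
      · omega
    · have := rep_mono (n := n) h2
      omega

/-- The extracted word of a semimodule. -/
noncomputable def cw (n : ℕ) (Δ : Set ℕ) : ℕ → ℕ :=
  fun r => if 0 < r ∧ r < n then sInf {k | r + n * k ∈ Δ} else 0

lemma cw_spec {n : ℕ} {Δ : Set ℕ} (hsm : IsSemiModule n (n+1) Δ) (hn : 1 ≤ n)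
    {r : ℕ} (hr : r < n) :
    r + n * cw n Δ r ∈ Δ ∧ ∀ k, r + n * k ∈ Δ → cw n Δ r ≤ k := by
  rcases Nat.eq_zero_or_pos r with rfl | hrpos
  · unfold cw
    rw [if_neg (by omega)]
    exact ⟨by simpa using hsm.1, fun k _ => Nat.zero_le k⟩
  · have hne : (({k | r + n * k ∈ Δ}) : Set ℕ).Nonempty := by
      refine ⟨r, ?_⟩
      have := hsm.2 0 hsm.1 (r * (n+1)) ⟨0, r, by ring⟩
      simp only [Set.mem_setOf_eq]
      have heq : r + n * r = 0 + r * (n+1) := by ring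
      rw [heq]
      exact this
    unfold cw
    rw [if_pos ⟨hrpos, hr⟩]
    exact ⟨Nat.sInf_mem hne, fun k hk => Nat.sInf_le hk⟩

lemma cw_word {n : ℕ} {Δ : Set ℕ} (hsm : IsSemiModule n (n+1) Δ) (hn : 1 ≤ n) :
    Word n (cw n Δ) := by
  constructor
  · intro i hi
    obtain ⟨hmem, _⟩ := cw_spec hsm hn (r := i) (by omega)
    obtain ⟨_, hmin⟩ := cw_spec hsm hn (r := i+1) (by omega)
    have hstep : (i + n * cw n Δ i) + (n+1) ∈ Δ := hsm.2 _ hmem (n+1) ⟨0, 1, by ring⟩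
    have heq : (i + n * cw n Δ i) + (n+1) = (i+1) + n * (cw n Δ i + 1) := by ring
    rw [heq] at hstep
    exact hmin _ hstep
  · intro i hi
    unfold cw
    rcases hi with hi | hi
    · rw [if_neg (by omega)]
    · rw [if_neg (by omega)]

lemma Dset_cw {n : ℕ} {Δ : Set ℕ} (hsm : IsSemiModule n (n+1) Δ) (hn : 1 ≤ n) :
    Dset n (cw n Δ) = Δ := by
  apply Set.eq_of_subset_of_subset
  · rintro x ⟨r, k, hr, rfl, hk⟩
    obtain ⟨hmem, _⟩ := cw_spec hsm hn hr
    have := hsm.2 _ hmem ((k - cw n Δ r) * n) ⟨k - cw n Δ r, 0, by ring⟩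
    have heq : (r + n * cw n Δ r) + (k - cw n Δ r) * n = r + n * k := by
      have h2 : n * cw n Δ r + (k - cw n Δ r) * n = n * k := by
        rw [Nat.mul_comm (k - cw n Δ r) n, ← Nat.mul_add]
        congr 1
        omega
      omega
    rwa [heq] at this
  · intro x hx
    have hxd : x % n + n * (x / n) = x := Nat.mod_add_div x n
    have hrn : x % n < n := Nat.mod_lt _ (by omega)
    obtain ⟨_, hmin⟩ := cw_spec hsm hn hrn
    exact ⟨x % n, x / n, hrn, hxd.symm, hmin _ (by rwa [hxd])⟩

lemma cw_Dset {n : ℕ} {c : ℕ → ℕ} (hw : Word n c) (hn : 1 ≤ n) :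
    cw n (Dset n c) = c := by
  funext r
  by_cases hr : r < n
  · have hsm := Dset_semimodule hn hw
    obtain ⟨hmem, hmin⟩ := cw_spec hsm hn hr
    have h1 : cw n (Dset n c) r ≤ c r := hmin _ ⟨r, c r, hr, rfl, le_rfl⟩
    have h2 : c r ≤ cw n (Dset n c) r := by
      obtain ⟨r', k', hr', heq, hk'⟩ := hmem
      obtain ⟨hre, hke⟩ := decomp_unique hr hr' heq
      rw [← hre] at hk'
      omega
    omega
  · unfold cw
    rw [if_neg (by omega), hw.2 r (Or.inl (by omega))]


open scoped Classical in
lemma count_basis {n : ℕ} {c : ℕ → ℕ} (hn : 1 ≤ n) {s : ℕ} (hs : s < n) :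
    Nat.count (· ∈ pBasis n (Dset n c)) (s + n * c s) = rnk n c s := by
  classical
  rw [Nat.count_eq_card_filter_range]
  unfold rnk
  symm
  apply Finset.card_nbij (i := fun r => r + n * c r)
  · intro r hrm
    simp only [mem_coe, mem_filter, mem_range] at hrm
    obtain ⟨hr, hklt⟩ := hrm
    simp only [mem_coe, mem_filter, mem_range]
    constructor
    · exact (blt_iff hr hs).mp hklt
    · exact (mem_basis_iff hn).mpr ⟨r, hr, rfl⟩
  · intro a ha b hb hab
    simp only [coe_filter, Set.mem_setOf_eq, mem_range] at ha hb
    simp only at hab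
    exact (decomp_unique (by omega) (by omega) hab).1
  · intro x hx
    simp only [coe_filter, Set.mem_setOf_eq, mem_range, mem_coe, mem_filter] at hx
    obtain ⟨hxlt, hxB⟩ := hx
    obtain ⟨r, hr, rfl⟩ := (mem_basis_iff hn).mp hxB
    refine ⟨r, ?_, rfl⟩
    simp only [coe_filter, Set.mem_setOf_eq, mem_range]
    exact ⟨hr, (blt_iff hr hs).mpr hxlt⟩

open scoped Classical in
lemma nth_basis {n : ℕ} {c : ℕ → ℕ} (hn : 1 ≤ n) {s : ℕ} (hs : s < n) :
    Nat.nth (· ∈ pBasis n (Dset n c)) (rnk n c s) = s + n * c s := by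
  classical
  rw [← count_basis hn hs]
  exact Nat.nth_count ((mem_basis_iff hn).mpr ⟨s, hs, rfl⟩)

lemma gInt_eq_vl {n : ℕ} {c : ℕ → ℕ} (hn : 1 ≤ n) {s : ℕ} (hs : s < n) :
    gInt (n+1) (Dset n c) (s + n * c s) = vl n c s := by
  classical
  set a := s + n * c s with ha_def
  -- the per-element data
  have hgspec : ∀ r, r < n → klt (c s + 1) s (c r) r →
      ∃ kk, a + 1 + (r + n * c r - (a+1)) % n = r + n * kk ∧ kk < c r ∧
        a + 1 ≤ a + 1 + (r + n * c r - (a+1)) % n ∧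
        a + 1 + (r + n * c r - (a+1)) % n ≤ a + n := by
    intro r hr hklt
    have hblt : a + n < r + n * c r := by
      have := (blt_iff (show s < n by omega) hr).mp hklt
      have hx : s + n * (c s + 1) = a + n := by rw [ha_def]; ring
      omega
    set D := r + n * c r - (a+1) with hD_def
    have hDn : n ≤ D := by omega
    have hdm : n * (D / n) + D % n = D := Nat.div_add_mod D n
    have hmodlt : D % n < n := Nat.mod_lt _ (by omega)
    have hquot1 : 1 ≤ D / n := (Nat.one_le_div_iff (by omega)).mpr hDn
    have hquotle : D / n ≤ c r := by
      have hD2 : D < n * (c r + 1) := by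
        have : n * (c r + 1) = n * c r + n := by ring
        omega
      have : n * (D / n) < n * (c r + 1) := by omega
      have := Nat.lt_of_mul_lt_mul_left this
      omega
    refine ⟨c r - D / n, ?_, by omega, by omega, by omega⟩
    have hsplitm : n * (c r - D / n) + n * (D / n) = n * c r := by
      rw [← Nat.mul_add]
      congr 1
      omega
    omega
  have hEq : Set.Ico a (a + (n+1)) \ Dset n c
      = ↑(((range n).filter (fun r => klt (c s + 1) s (c r) r)).image
          (fun r => a + 1 + (r + n * c r - (a+1)) % n)) := by
    apply Set.eq_of_subset_of_subset
    · rintro x ⟨hxI, hxD⟩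
      simp only [Set.mem_Ico] at hxI
      have hxa : x ≠ a := by
        rintro rfl
        exact hxD ⟨s, c s, hs, ha_def, le_rfl⟩
      have hxd : x % n + n * (x / n) = x := Nat.mod_add_div x n
      have hrn : x % n < n := Nat.mod_lt _ (by omega)
      have hk : ¬ (c (x % n) ≤ x / n) := fun h => hxD ⟨x % n, x / n, hrn, hxd.symm, h⟩
      have hklt : klt (c s + 1) s (c (x % n)) (x % n) := by
        rw [blt_iff (show s < n by omega) hrn]
        have hx : s + n * (c s + 1) = a + n := by rw [ha_def]; ring
        have : x % n + n * (x / n + 1) ≤ x % n + n * c (x % n) := by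
          have := rep_mono (n := n) (show x / n < c (x % n) by omega)
          have h1 : n * (x / n + 1) = n * (x/n) + n := by ring
          omega
        have h1 : n * (x / n + 1) = n * (x/n) + n := by ring
        omega
      obtain ⟨kk, hg1, hg2, hg3, hg4⟩ := hgspec (x % n) hrn hklt
      simp only [Finset.coe_image, Set.mem_image, mem_coe, mem_filter, mem_range]
      refine ⟨x % n, ⟨hrn, hklt⟩, ?_⟩
      -- x and g r are both ≡ x % n in the window (a, a+n]
      rw [hg1]
      have hxk : x = x % n + n * (x / n) := hxd.symm
      rcases Nat.lt_trichotomy kk (x / n) with h | h | h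
      · exfalso
        have := rep_mono (n := n) h
        omega
      · rw [h, ← hxk]
      · exfalso
        have := rep_mono (n := n) h
        omega
    · intro x hx
      simp only [Finset.coe_image, Set.mem_image, mem_coe, mem_filter, mem_range] at hx
      obtain ⟨r, ⟨hr, hklt⟩, rfl⟩ := hx
      obtain ⟨kk, hg1, hg2, hg3, hg4⟩ := hgspec r hr hklt
      constructor
      · simp only [Set.mem_Ico]
        omega
      · intro hmem
        obtain ⟨r', k', hr', heq, hk'⟩ := hmem
        rw [hg1] at heq
        obtain ⟨h1, h2⟩ := decomp_unique hr hr' heq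
        rw [← h1] at hk'
        omega
  unfold gInt
  rw [hEq, Set.ncard_coe_finset, Finset.card_image_of_injOn]
  · rfl
  · intro x hx y hy hxy
    simp only [coe_filter, Set.mem_setOf_eq, mem_range] at hx hy
    obtain ⟨kx, hgx, _, _, _⟩ := hgspec x hx.1 hx.2
    obtain ⟨ky, hgy, _, _, _⟩ := hgspec y hy.1 hy.2
    simp only at hxy
    rw [hgx, hgy] at hxy
    exact (decomp_unique hx.1 hy.1 hxy).1

lemma gSeq_eq_Z {n : ℕ} {c : ℕ → ℕ} (hn : 1 ≤ n) (hw : Word n c) (k : Fin n) :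
    gSeq n (Dset n c) k = Z n c (k : ℕ) := by
  obtain ⟨s, hsn, hsk⟩ := rnk_surj (n := n) (c := c) (k := (k : ℕ)) k.2
  unfold gSeq
  rw [← hsk, nth_basis hn hsn, gInt_eq_vl hn hsn, Z_rnk hsn]


end SM

/-- `Δ ↦ (g(a_0), …, g(a_{n-1}))` is a bijection from the `0`-normalized
`Γ^{n,n+1}`-semi-modules onto the weakly decreasing sequences `λ_1 ≥ … ≥ λ_n ≥ 0` with
`λ_k ≤ n - k` (Young diagrams in the staircase `(n-1, …, 1, 0)`); in particular the
sequence is always weakly decreasing. -/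
theorem stmt_12 (n : ℕ) (hn : 1 ≤ n) :
    Set.BijOn (gSeq n) {Δ | IsSemiModule n (n + 1) Δ}
      {l : Fin n → ℕ | Antitone l ∧ ∀ k : Fin n, l k ≤ n - ((k : ℕ) + 1)} ∧
    ∀ Δ : Set ℕ, IsSemiModule n (n + 1) Δ → Antitone (gSeq n Δ) := by
  obtain ⟨mS, mU, mE⟩ := SM.main n
  have hbr : ∀ Δ, IsSemiModule n (n+1) Δ →
      ∀ k : Fin n, gSeq n Δ k = SM.Z n (SM.cw n Δ) (k : ℕ) := by
    intro Δ hΔ k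
    conv_lhs => rw [← SM.Dset_cw hΔ hn]
    exact SM.gSeq_eq_Z hn (SM.cw_word hΔ hn) k
  have hanti : ∀ Δ : Set ℕ, IsSemiModule n (n + 1) Δ → Antitone (gSeq n Δ) := by
    intro Δ hΔ a b hab
    rw [hbr Δ hΔ a, hbr Δ hΔ b]
    exact (mS _ (SM.cw_word hΔ hn)).1 _ _ (Fin.le_def.mp hab)
  refine ⟨⟨?_, ?_, ?_⟩, hanti⟩
  · -- MapsTo
    intro Δ hΔ
    refine ⟨hanti Δ hΔ, ?_⟩
    intro k
    rw [hbr Δ hΔ k]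
    have := (mS _ (SM.cw_word hΔ hn)).2.1 (k : ℕ) k.2
    omega
  · -- InjOn
    intro Δ hΔ Δ' hΔ' heq
    have hceq : SM.cw n Δ = SM.cw n Δ' := by
      apply mU _ _ (SM.cw_word hΔ hn) (SM.cw_word hΔ' hn)
      intro k
      by_cases hk : k < n
      · have h1 := hbr Δ hΔ ⟨k, hk⟩
        have h2 := hbr Δ' hΔ' ⟨k, hk⟩
        simp only at h1 h2
        rw [← h1, ← h2]
        rw [heq]
      · rw [SM.Z_zero_of_ge (by omega), SM.Z_zero_of_ge (by omega)]
    calc Δ = SM.Dset n (SM.cw n Δ) := (SM.Dset_cw hΔ hn).symm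
      _ = SM.Dset n (SM.cw n Δ') := by rw [hceq]
      _ = Δ' := SM.Dset_cw hΔ' hn
  · -- SurjOn
    intro l hl
    obtain ⟨hlanti, hlbound⟩ := hl
    set l' : ℕ → ℕ := fun k => if h : k < n then l ⟨k, h⟩ else 0 with hl'_def
    have hst : SM.Stair n l' := by
      refine ⟨?_, ?_, ?_⟩
      · intro j k hjk
        rw [hl'_def]
        simp only
        by_cases hk : k < n
        · rw [dif_pos hk, dif_pos (show j < n by omega)]
          exact hlanti (Fin.mk_le_mk.mpr hjk)
        · rw [dif_neg hk]
          omega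
      · intro k hk
        rw [hl'_def]
        simp only
        rw [dif_pos hk]
        have := hlbound ⟨k, hk⟩
        simp only at this
        omega
      · intro k hk
        rw [hl'_def]
        simp only
        rw [dif_neg (by omega)]
    obtain ⟨c, hwc, hZc⟩ := mE l' hst
    refine ⟨SM.Dset n c, SM.Dset_semimodule hn hwc, ?_⟩
    funext k
    have h1 := SM.gSeq_eq_Z hn hwc k
    rw [h1, hZc (k : ℕ), hl'_def]
    simp only
    rw [dif_pos k.2]
end
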